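/- arXiv:2304.14077 — 6 statements merged into one kernel-verified Lean document; each statement's English description precedes it below -/
import Mathlib

section
/- Let n ≥ 1, let V be a real linear subspace of the space of complex n×n matrices equipped with the Frobenius norm, and let A ∈ V. Suppose c is a real-valued function on matrices such that for every X ∈ V, the quantity sup{‖exp(X+E) − exp(X)‖_F : E ∈ V, ‖E‖_F ≤ ε}/ε tends to c(X) as ε → 0⁺ (i.e., c is the structured level-1 condition number of the matrix exponential with perturbations restricted to V). Then limsup_{ε→0⁺} of sup{|c(A+Z) − c(A)| : Z ∈ V, ‖Z‖_F ≤ ε}/ε is at most sup{‖D²exp(A)[E,Z]‖_F : E, Z ∈ V, ‖E‖_F = 1, ‖Z‖_F = 1}, where D²exp(A)[E,Z] is the second (real) Fréchet derivative of the matrix exponential at A applied to the pair of directions (E, Z). -/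
open Filter Topology Matrix

attribute [local instance] Matrix.frobeniusSeminormedAddCommGroup
  Matrix.frobeniusNormedAddCommGroup Matrix.frobeniusIsBoundedSMul
  Matrix.frobeniusNormedSpace Matrix.frobeniusNormedRing Matrix.frobeniusNormedAlgebra

section Aux
variable {𝔼 : Type*} [NormedAddCommGroup 𝔼] [NormedSpace ℝ 𝔼]

theorem my_aux_lemma (f : 𝔼 → 𝔼) (hf : ContDiff ℝ 2 f)
    (V : Submodule ℝ 𝔼) (A : 𝔼) (hA : A ∈ V)
    (c : 𝔼 → ℝ)
    (hc : ∀ X ∈ V, Tendsto (fun ε : ℝ =>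
        (sSup {r : ℝ | ∃ E ∈ V, ‖E‖ ≤ ε ∧ r = ‖f (X + E) - f X‖}) / ε)
      (𝓝[>] 0) (𝓝 (c X))) :
    Filter.limsup (fun ε : ℝ =>
        (sSup {r : ℝ | ∃ Z ∈ V, ‖Z‖ ≤ ε ∧ r = |c (A + Z) - c A|}) / ε) (𝓝[>] 0)
      ≤ sSup {r : ℝ | ∃ E ∈ V, ∃ Z ∈ V, ‖E‖ = 1 ∧ ‖Z‖ = 1 ∧
          r = ‖fderiv ℝ (fderiv ℝ f) A Z E‖} := by
  set D := fderiv ℝ f with hDdef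
  set D2 := fderiv ℝ D A with hD2def
  have hdiff : ∀ X, HasFDerivAt f (D X) X := fun X =>
    ((hf.differentiable (by norm_num)) X).hasFDerivAt
  have hD : ContDiff ℝ 1 D := hf.fderiv_right (by norm_num)
  have hD2 : HasFDerivAt D D2 A := ((hD.differentiable (by norm_num)) A).hasFDerivAt
  set Mset := {r : ℝ | ∃ E ∈ V, ∃ Z ∈ V, ‖E‖ = 1 ∧ ‖Z‖ = 1 ∧ r = ‖D2 Z E‖} with hMset
  set M := sSup Mset with hM
  have bddM : BddAbove Mset := by
    refine ⟨‖D2‖, ?_⟩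
    rintro r ⟨E, hE, Z, hZ, hE1, hZ1, rfl⟩
    calc ‖D2 Z E‖ ≤ ‖D2 Z‖ * ‖E‖ := (D2 Z).le_opNorm E
      _ ≤ (‖D2‖ * ‖Z‖) * ‖E‖ := by
          exact mul_le_mul_of_nonneg_right (D2.le_opNorm Z) (norm_nonneg _)
      _ = ‖D2‖ := by rw [hE1, hZ1]; ring
  -- trivial subspace case
  by_cases hVt : ∀ x ∈ V, x = (0 : 𝔼)
  · have hMempty : Mset = ∅ := by
      ext r
      simp only [Set.mem_setOf_eq, Set.mem_empty_iff_false, iff_false]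
      rintro ⟨E, hE, Z, hZ, hE1, hZ1, rfl⟩
      have := hVt E hE
      rw [this, norm_zero] at hE1
      norm_num at hE1
    have hzero : ∀ᶠ ε : ℝ in 𝓝[>] 0,
        (sSup {r : ℝ | ∃ Z ∈ V, ‖Z‖ ≤ ε ∧ r = |c (A + Z) - c A|}) / ε = 0 := by
      filter_upwards [self_mem_nhdsWithin] with ε (hε : 0 < ε)
      have : {r : ℝ | ∃ Z ∈ V, ‖Z‖ ≤ ε ∧ r = |c (A + Z) - c A|} = {0} := by
        ext r
        simp only [Set.mem_setOf_eq, Set.mem_singleton_iff]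
        constructor
        · rintro ⟨Z, hZ, _, rfl⟩
          rw [hVt Z hZ]; simp
        · rintro rfl
          exact ⟨0, V.zero_mem, by simp [le_of_lt hε]⟩
      rw [this, csSup_singleton, zero_div]
    have h1 : Filter.limsup (fun ε : ℝ =>
        (sSup {r : ℝ | ∃ Z ∈ V, ‖Z‖ ≤ ε ∧ r = |c (A + Z) - c A|}) / ε) (𝓝[>] 0) ≤ 0 := by
      apply Filter.limsup_le_of_le
      · exact isCoboundedUnder_le_of_eventually_le _
          (by filter_upwards [hzero] with ε h; exact ge_of_eq h)
      · filter_upwards [hzero] with ε h; exact le_of_eq h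
    have hMz : M = 0 := by rw [hM, hMempty, Real.sSup_empty]
    rw [hMz]
    exact h1
  push_neg at hVt
  obtain ⟨x0, hx0V, hx0⟩ := hVt
  have hu1 : ‖(‖x0‖⁻¹ • x0 : 𝔼)‖ = 1 := by
    rw [norm_smul, norm_inv, norm_norm, inv_mul_cancel₀ (norm_ne_zero_iff.mpr hx0)]
  have huV : (‖x0‖⁻¹ • x0 : 𝔼) ∈ V := V.smul_mem _ hx0V
  have hM0 : 0 ≤ M := le_trans (norm_nonneg _)
    (le_csSup bddM ⟨_, huV, _, huV, hu1, hu1, rfl⟩)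
  -- bilinear bound
  have hbil : ∀ Z ∈ V, ∀ E ∈ V, ‖E‖ ≤ 1 → ‖D2 Z E‖ ≤ M * ‖Z‖ := by
    intro Z hZ E hE hE1
    rcases eq_or_ne Z 0 with rfl | hZ0
    · simp
    rcases eq_or_ne E 0 with rfl | hE0
    · simp [mul_nonneg hM0 (norm_nonneg _)]
    have hz1 : ‖(‖Z‖⁻¹ • Z : 𝔼)‖ = 1 := by
      rw [norm_smul, norm_inv, norm_norm, inv_mul_cancel₀ (norm_ne_zero_iff.mpr hZ0)]
    have he1 : ‖(‖E‖⁻¹ • E : 𝔼)‖ = 1 := by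
      rw [norm_smul, norm_inv, norm_norm, inv_mul_cancel₀ (norm_ne_zero_iff.mpr hE0)]
    have key : ‖D2 (‖Z‖⁻¹ • Z) (‖E‖⁻¹ • E)‖ ≤ M :=
      le_csSup bddM ⟨_, V.smul_mem _ hE, _, V.smul_mem _ hZ, he1, hz1, rfl⟩
    have hEq : D2 (‖Z‖⁻¹ • Z) (‖E‖⁻¹ • E) = (‖Z‖⁻¹ * ‖E‖⁻¹) • D2 Z E := by
      simp only [_root_.map_smul, ContinuousLinearMap.smul_apply, smul_smul]
      rw [mul_comm]
    rw [hEq, norm_smul, norm_mul, norm_inv, norm_inv, norm_norm, norm_norm] at key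
    have hZn : (0:ℝ) < ‖Z‖ := norm_pos_iff.mpr hZ0
    have hEn : (0:ℝ) < ‖E‖ := norm_pos_iff.mpr hE0
    have : ‖D2 Z E‖ ≤ M * ‖Z‖ * ‖E‖ := by
      rw [mul_assoc] at key ⊢
      calc ‖D2 Z E‖ = (‖Z‖ * ‖E‖) * ((‖Z‖ * ‖E‖)⁻¹ * ‖D2 Z E‖) := by
            field_simp
        _ ≤ (‖Z‖ * ‖E‖) * M := by
            apply mul_le_mul_of_nonneg_left _ (by positivity)
            rw [mul_inv, mul_assoc]
            exact key
        _ = M * (‖Z‖ * ‖E‖) := by ring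
    calc ‖D2 Z E‖ ≤ M * ‖Z‖ * ‖E‖ := this
      _ ≤ M * ‖Z‖ * 1 := by
          exact mul_le_mul_of_nonneg_left hE1 (by positivity)
      _ = M * ‖Z‖ := by ring
  -- the level-1 function L
  set L : 𝔼 → ℝ := fun X => sSup {r : ℝ | ∃ E ∈ V, ‖E‖ ≤ 1 ∧ r = ‖D X E‖} with hLdef
  have hLne : ∀ X : 𝔼, {r : ℝ | ∃ E ∈ V, ‖E‖ ≤ 1 ∧ r = ‖D X E‖}.Nonempty :=
    fun X => ⟨‖D X 0‖, 0, V.zero_mem, by simp, rfl⟩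
  have hLbdd : ∀ X : 𝔼, BddAbove {r : ℝ | ∃ E ∈ V, ‖E‖ ≤ 1 ∧ r = ‖D X E‖} := by
    intro X
    refine ⟨‖D X‖, ?_⟩
    rintro r ⟨E, hE, hE1, rfl⟩
    calc ‖D X E‖ ≤ ‖D X‖ * ‖E‖ := (D X).le_opNorm E
      _ ≤ ‖D X‖ * 1 := mul_le_mul_of_nonneg_left hE1 (norm_nonneg _)
      _ = ‖D X‖ := mul_one _
  have hL0 : ∀ X : 𝔼, 0 ≤ L X := by
    intro X
    have := le_csSup (hLbdd X) (hLne X).choose_spec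
    calc (0:ℝ) ≤ ‖D X 0‖ := norm_nonneg _
      _ ≤ L X := le_csSup (hLbdd X) ⟨0, V.zero_mem, by simp, rfl⟩
  have hLscale : ∀ X : 𝔼, ∀ E ∈ V, ‖D X E‖ ≤ L X * ‖E‖ := by
    intro X E hE
    rcases eq_or_ne E 0 with rfl | hE0
    · simp
    have hEn : (0:ℝ) < ‖E‖ := norm_pos_iff.mpr hE0
    have he1 : ‖(‖E‖⁻¹ • E : 𝔼)‖ ≤ 1 := by
      rw [norm_smul, norm_inv, norm_norm]; field_simp; exact le_rfl
    have key : ‖D X (‖E‖⁻¹ • E)‖ ≤ L X :=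
      le_csSup (hLbdd X) ⟨_, V.smul_mem _ hE, he1, rfl⟩
    rw [_root_.map_smul, norm_smul, norm_inv, norm_norm] at key
    calc ‖D X E‖ = ‖E‖ * (‖E‖⁻¹ * ‖D X E‖) := by field_simp
      _ ≤ ‖E‖ * L X := mul_le_mul_of_nonneg_left key (le_of_lt hEn)
      _ = L X * ‖E‖ := mul_comm _ _
  -- c = L on V
  have hcL : ∀ X ∈ V, c X = L X := by
    intro X hX
    refine tendsto_nhds_unique (hc X hX) ?_
    rw [Metric.tendsto_nhds]
    intro δ hδ
    have hlittle := (hasFDerivAt_iff_isLittleO_nhds_zero.mp (hdiff X)).def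
      (show (0:ℝ) < δ/4 by linarith)
    rw [Metric.eventually_nhds_iff] at hlittle
    obtain ⟨ρ, hρ, hball⟩ := hlittle
    filter_upwards [Ioc_mem_nhdsGT_of_mem (Set.mem_Ico.mpr ⟨le_refl 0, half_pos hρ⟩)]
      with ε hε
    obtain ⟨hε0, hερ⟩ := hε
    have hεltρ : ε < ρ := lt_of_le_of_lt hερ (half_lt_self hρ)
    have herr : ∀ h : 𝔼, ‖h‖ ≤ ε → ‖f (X + h) - f X - D X h‖ ≤ (δ/4) * ‖h‖ := by
      intro h hh
      have : dist h 0 < ρ := by rw [dist_zero_right]; exact lt_of_le_of_lt hh hεltρ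
      simpa [norm_norm] using hball this
    set Sset := {r : ℝ | ∃ E ∈ V, ‖E‖ ≤ ε ∧ r = ‖f (X + E) - f X‖} with hSset
    have hSub : ∀ s ∈ Sset, s ≤ ε * (L X + δ/4) := by
      rintro s ⟨E, hE, hEε, rfl⟩
      calc ‖f (X + E) - f X‖
          ≤ ‖D X E‖ + ‖f (X + E) - f X - D X E‖ := by
            have := norm_add_le (D X E) (f (X + E) - f X - D X E)
            simpa using this
        _ ≤ L X * ‖E‖ + (δ/4) * ‖E‖ := add_le_add (hLscale X E hE) (herr E hEε)
        _ ≤ L X * ε + (δ/4) * ε := by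
            have h1 := mul_le_mul_of_nonneg_left hEε (hL0 X)
            have h2 := mul_le_mul_of_nonneg_left hEε (show (0:ℝ) ≤ δ/4 by linarith)
            linarith
        _ = ε * (L X + δ/4) := by ring
    have hSbdd : BddAbove Sset := ⟨ε * (L X + δ/4), fun s hs => hSub s hs⟩
    have hSne : Sset.Nonempty := ⟨‖f (X + 0) - f X‖, 0, V.zero_mem, by simp [le_of_lt hε0], rfl⟩
    have hup : sSup Sset ≤ ε * (L X + δ/4) := csSup_le hSne hSub
    -- lower bound
    have hlow : ε * (L X - δ/2) ≤ sSup Sset := by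
      obtain ⟨r0, hr0mem, hr0⟩ := exists_lt_of_lt_csSup (hLne X)
        (show L X - δ/4 < L X by linarith)
      obtain ⟨E0, hE0V, hE01, rfl⟩ := hr0mem
      have hmem : ‖f (X + ε • E0) - f X‖ ∈ Sset := by
        refine ⟨ε • E0, V.smul_mem _ hE0V, ?_, rfl⟩
        rw [norm_smul, Real.norm_eq_abs, abs_of_pos hε0]
        calc ε * ‖E0‖ ≤ ε * 1 := mul_le_mul_of_nonneg_left hE01 (le_of_lt hε0)
          _ = ε := mul_one _
      have hnorm : ‖ε • E0‖ ≤ ε := by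
        rw [norm_smul, Real.norm_eq_abs, abs_of_pos hε0]
        calc ε * ‖E0‖ ≤ ε * 1 := mul_le_mul_of_nonneg_left hE01 (le_of_lt hε0)
          _ = ε := mul_one _
      have h1 : ‖D X (ε • E0)‖ - ‖f (X + ε • E0) - f X - D X (ε • E0)‖
          ≤ ‖f (X + ε • E0) - f X‖ := by
        have h2 : D X (ε • E0)
            = (f (X + ε • E0) - f X) - (f (X + ε • E0) - f X - D X (ε • E0)) := by abel
        have h3 := norm_sub_le (f (X + ε • E0) - f X) (f (X + ε • E0) - f X - D X (ε • E0))
        rw [← h2] at h3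
        linarith
      have h3 : ε * (L X - δ/4) ≤ ‖D X (ε • E0)‖ := by
        rw [_root_.map_smul, norm_smul, Real.norm_eq_abs, abs_of_pos hε0]
        exact mul_le_mul_of_nonneg_left (le_of_lt hr0) (le_of_lt hε0)
      have h4 : ‖f (X + ε • E0) - f X - D X (ε • E0)‖ ≤ (δ/4) * ε := by
        calc ‖f (X + ε • E0) - f X - D X (ε • E0)‖ ≤ (δ/4) * ‖ε • E0‖ := herr _ hnorm
          _ ≤ (δ/4) * ε := mul_le_mul_of_nonneg_left hnorm (by linarith)
      calc ε * (L X - δ/2) = ε * (L X - δ/4) - (δ/4) * ε := by ring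
        _ ≤ ‖f (X + ε • E0) - f X‖ := by linarith
        _ ≤ sSup Sset := le_csSup hSbdd hmem
    rw [Real.dist_eq, abs_lt]
    constructor
    · have h5 : L X - δ/2 ≤ sSup Sset / ε := by
        rw [le_div_iff₀ hε0]
        calc (L X - δ/2) * ε = ε * (L X - δ/2) := mul_comm _ _
          _ ≤ sSup Sset := hlow
      linarith
    · have h6 : sSup Sset / ε ≤ L X + δ/4 := by
        rw [div_le_iff₀ hε0]
        calc sSup Sset ≤ ε * (L X + δ/4) := hup
          _ = (L X + δ/4) * ε := mul_comm _ _
      linarith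
  -- main estimate
  have main : ∀ δ > (0:ℝ), Filter.limsup (fun ε : ℝ =>
      (sSup {r : ℝ | ∃ Z ∈ V, ‖Z‖ ≤ ε ∧ r = |c (A + Z) - c A|}) / ε) (𝓝[>] 0)
      ≤ M + δ := by
    intro δ hδ
    have hlittle := (hasFDerivAt_iff_isLittleO_nhds_zero.mp hD2).def hδ
    rw [Metric.eventually_nhds_iff] at hlittle
    obtain ⟨ρ, hρ, hball⟩ := hlittle
    have hev : ∀ᶠ ε : ℝ in 𝓝[>] 0,
        0 ≤ (sSup {r : ℝ | ∃ Z ∈ V, ‖Z‖ ≤ ε ∧ r = |c (A + Z) - c A|}) / ε ∧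
        (sSup {r : ℝ | ∃ Z ∈ V, ‖Z‖ ≤ ε ∧ r = |c (A + Z) - c A|}) / ε ≤ M + δ := by
      filter_upwards [Ioc_mem_nhdsGT_of_mem (Set.mem_Ico.mpr ⟨le_refl 0, half_pos hρ⟩)]
        with ε hε
      obtain ⟨hε0, hερ⟩ := hε
      have hεltρ : ε < ρ := lt_of_le_of_lt hερ (half_lt_self hρ)
      have herr : ∀ Z : 𝔼, ‖Z‖ ≤ ε → ‖D (A + Z) - D A - D2 Z‖ ≤ δ * ‖Z‖ := by
        intro Z hZ
        have : dist Z 0 < ρ := by rw [dist_zero_right]; exact lt_of_le_of_lt hZ hεltρ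
        simpa [norm_norm] using hball this
      have hLdiff : ∀ Z ∈ V, ‖Z‖ ≤ ε → |L (A + Z) - L A| ≤ (M + δ) * ‖Z‖ := by
        intro Z hZV hZε
        have hDdiff : ∀ E ∈ V, ‖E‖ ≤ 1 →
            ‖D (A + Z) E - D A E‖ ≤ (M + δ) * ‖Z‖ := by
          intro E hEV hE1
          have h1 : D (A + Z) E - D A E = (D (A + Z) - D A - D2 Z) E + D2 Z E := by
            simp [ContinuousLinearMap.sub_apply]
          rw [h1]
          calc ‖(D (A + Z) - D A - D2 Z) E + D2 Z E‖
              ≤ ‖(D (A + Z) - D A - D2 Z) E‖ + ‖D2 Z E‖ := norm_add_le _ _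
            _ ≤ ‖D (A + Z) - D A - D2 Z‖ * ‖E‖ + M * ‖Z‖ :=
                add_le_add ((D (A + Z) - D A - D2 Z).le_opNorm E) (hbil Z hZV E hEV hE1)
            _ ≤ (δ * ‖Z‖) * 1 + M * ‖Z‖ := by
                have := mul_le_mul (herr Z hZε) hE1 (norm_nonneg _)
                  (by positivity : (0:ℝ) ≤ δ * ‖Z‖)
                linarith
            _ = (M + δ) * ‖Z‖ := by ring
        have hub : L (A + Z) ≤ L A + (M + δ) * ‖Z‖ := by
          apply csSup_le (hLne (A + Z))
          rintro r ⟨E, hEV, hE1, rfl⟩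
          have h1 : ‖D (A + Z) E‖ ≤ ‖D A E‖ + (M + δ) * ‖Z‖ := by
            have := norm_sub_norm_le (D (A + Z) E) (D A E)
            linarith [hDdiff E hEV hE1]
          have h2 : ‖D A E‖ ≤ L A := by
            calc ‖D A E‖ ≤ L A * ‖E‖ := hLscale A E hEV
              _ ≤ L A * 1 := mul_le_mul_of_nonneg_left hE1 (hL0 A)
              _ = L A := mul_one _
          linarith
        have hlb : L A ≤ L (A + Z) + (M + δ) * ‖Z‖ := by
          apply csSup_le (hLne A)
          rintro r ⟨E, hEV, hE1, rfl⟩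
          have h1 : ‖D A E‖ ≤ ‖D (A + Z) E‖ + (M + δ) * ‖Z‖ := by
            have := norm_sub_norm_le (D A E) (D (A + Z) E)
            have h2 := hDdiff E hEV hE1
            rw [norm_sub_rev] at h2
            linarith
          have h2 : ‖D (A + Z) E‖ ≤ L (A + Z) :=
            le_csSup (hLbdd (A + Z)) ⟨E, hEV, hE1, rfl⟩
          linarith
        rw [abs_le]
        constructor <;> linarith
      have hTub : ∀ r ∈ {r : ℝ | ∃ Z ∈ V, ‖Z‖ ≤ ε ∧ r = |c (A + Z) - c A|},
          r ≤ (M + δ) * ε := by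
        rintro r ⟨Z, hZV, hZε, rfl⟩
        rw [hcL (A + Z) (V.add_mem hA hZV), hcL A hA]
        calc |L (A + Z) - L A| ≤ (M + δ) * ‖Z‖ := hLdiff Z hZV hZε
          _ ≤ (M + δ) * ε := mul_le_mul_of_nonneg_left hZε (by linarith)
      have hTne : {r : ℝ | ∃ Z ∈ V, ‖Z‖ ≤ ε ∧ r = |c (A + Z) - c A|}.Nonempty :=
        ⟨|c (A + 0) - c A|, 0, V.zero_mem, by simp [le_of_lt hε0], rfl⟩
      have hsup := csSup_le hTne hTub
      have hTbdd : BddAbove {r : ℝ | ∃ Z ∈ V, ‖Z‖ ≤ ε ∧ r = |c (A + Z) - c A|} :=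
        ⟨(M + δ) * ε, hTub⟩
      constructor
      · apply div_nonneg _ (le_of_lt hε0)
        calc (0:ℝ) ≤ |c (A + 0) - c A| := abs_nonneg _
          _ ≤ _ := le_csSup hTbdd ⟨0, V.zero_mem, by simp [le_of_lt hε0], rfl⟩
      · rw [div_le_iff₀ hε0]
        calc sSup {r : ℝ | ∃ Z ∈ V, ‖Z‖ ≤ ε ∧ r = |c (A + Z) - c A|}
            ≤ (M + δ) * ε := hsup
          _ = (M + δ) * ε := rfl
    exact Filter.limsup_le_of_le
      (isCoboundedUnder_le_of_eventually_le _ (hev.mono fun ε h => h.1))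
      (hev.mono fun ε h => h.2)
  -- conclude
  have := le_of_forall_pos_le_add (fun δ hδ => main δ hδ)
  exact this
end Aux

/-- Lemma 3.1 of the paper specialized to a real linear subspace `V` of the
complex `n × n` matrices (with the Frobenius norm) and to `f = exp`: if `c X` is the structured
level-1 condition number of the matrix exponential at `X` (perturbations restricted to `V`),
then the structured level-2 condition number at `A ∈ V` (as a limsup of difference quotients) is
bounded above by the supremum of `‖D²exp(A)[E,Z]‖` over unit-norm `E, Z ∈ V`. -/
theorem structured_level2_condition_number_exp_upper_bound
    (n : ℕ) (hn : 1 ≤ n)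
    (V : Submodule ℝ (Matrix (Fin n) (Fin n) ℂ))
    (A : Matrix (Fin n) (Fin n) ℂ) (hA : A ∈ V)
    (c : Matrix (Fin n) (Fin n) ℂ → ℝ)
    (hc : ∀ X ∈ V,
      Tendsto (fun ε : ℝ =>
          (sSup {r : ℝ | ∃ E ∈ V, ‖E‖ ≤ ε ∧
            r = ‖NormedSpace.exp (X + E) - NormedSpace.exp X‖}) / ε)
        (𝓝[>] 0) (𝓝 (c X))) :
    Filter.limsup (fun ε : ℝ =>
        (sSup {r : ℝ | ∃ Z ∈ V, ‖Z‖ ≤ ε ∧ r = |c (A + Z) - c A|}) / ε) (𝓝[>] 0)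
      ≤ sSup {r : ℝ | ∃ E ∈ V, ∃ Z ∈ V, ‖E‖ = 1 ∧ ‖Z‖ = 1 ∧
          r = ‖fderiv ℝ (fderiv ℝ NormedSpace.exp) A Z E‖} := by
  have hexp : ContDiff ℝ 2 (NormedSpace.exp :
      Matrix (Fin n) (Fin n) ℂ → Matrix (Fin n) (Fin n) ℂ) :=
    contDiff_iff_contDiffAt.mpr fun x =>
      ((NormedSpace.exp_analytic (𝕂 := ℂ) x).restrictScalars).contDiffAt
  exact my_aux_lemma _ hexp V A hA c hc
end

section
/- Let n ≥ 1 and let A ∈ ℂ^{n×n} be skew-Hermitian. Suppose c is a real-valued function on complex n×n matrices such that for every skew-Hermitian X, the quantity sup{‖exp(Y) − exp(X)‖₂ : Y skew-Hermitian, ‖Y − X‖₂ ≤ ε}/ε tends to c(X) as ε → 0⁺ (i.e., c is the structured level-1 condition number of the matrix exponential in the spectral norm, with skew-Hermitian perturbations). Then sup{|c(A+Z) − c(A)| : Z skew-Hermitian, ‖Z‖₂ ≤ ε}/ε tends to 0 as ε → 0⁺; that is, the structured level-2 condition number of the matrix exponential at A in the spectral norm is 0. -/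
open Filter Topology Matrix NormedSpace
open scoped Matrix.Norms.L2Operator

noncomputable instance instNormedAlgebraRatMatrixL2 (n : ℕ) : NormedAlgebra ℚ (Matrix (Fin n) (Fin n) ℂ) :=
  NormedAlgebra.restrictScalars ℚ ℂ _


lemma pow_sub_pow_norm_le {R : Type*} [NormedRing R] (a b : R) (k : ℕ) :
    ‖a ^ (k+1) - b ^ (k+1)‖ ≤ (k+1 : ℝ) * (max ‖a‖ ‖b‖) ^ k * ‖a - b‖ := by
  induction k with
  | zero => simp
  | succ k ih =>
    have hM : (0:ℝ) ≤ max ‖a‖ ‖b‖ := le_max_of_le_left (norm_nonneg a)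
    have key : a ^ (k+2) - b ^ (k+2) = a * (a ^ (k+1) - b ^ (k+1)) + (a - b) * b ^ (k+1) := by
      rw [pow_succ' a (k+1), pow_succ' b (k+1)]; noncomm_ring
    have hb : ‖b ^ (k+1)‖ ≤ (max ‖a‖ ‖b‖) ^ (k+1) :=
      (norm_pow_le' b (Nat.succ_pos k)).trans
        (pow_le_pow_left₀ (norm_nonneg b) (le_max_right _ _) _)
    calc ‖a ^ (k+2) - b ^ (k+2)‖ ≤ ‖a * (a ^ (k+1) - b ^ (k+1))‖ + ‖(a - b) * b ^ (k+1)‖ := by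
          rw [key]; exact norm_add_le _ _
      _ ≤ ‖a‖ * ‖a ^ (k+1) - b ^ (k+1)‖ + ‖a - b‖ * ‖b ^ (k+1)‖ :=
          add_le_add (norm_mul_le _ _) (norm_mul_le _ _)
      _ ≤ (max ‖a‖ ‖b‖) * ((k+1 : ℝ) * (max ‖a‖ ‖b‖) ^ k * ‖a - b‖)
            + ‖a - b‖ * (max ‖a‖ ‖b‖) ^ (k+1) := by
          gcongr
          exact le_max_left _ _
      _ = ((k:ℝ)+1+1) * (max ‖a‖ ‖b‖) ^ (k+1) * ‖a - b‖ := by ring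
      _ = ((k+1:ℕ)+1 : ℝ) * (max ‖a‖ ‖b‖) ^ (k+1) * ‖a - b‖ := by push_cast; ring

lemma norm_exp_sub_exp_le {𝔸 : Type*} [NormedRing 𝔸] [NormedAlgebra ℂ 𝔸] [CompleteSpace 𝔸]
    (P Q : 𝔸) : ‖exp P - exp Q‖ ≤ Real.exp (max ‖P‖ ‖Q‖) * ‖P - Q‖ := by
  set M := max ‖P‖ ‖Q‖ with hMdef
  set d := ‖P - Q‖ with hddef
  set g : ℕ → ℝ := fun k => Nat.casesOn k 0 (fun j => M ^ j / (Nat.factorial j : ℝ) * d) with hg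
  have h1 : HasSum (fun j : ℕ => M ^ j / (Nat.factorial j : ℝ) * d) (Real.exp M * d) := by
    have := (expSeries_div_hasSum_exp M).mul_right d
    rwa [← Real.exp_eq_exp_ℝ] at this
  have hgsum : HasSum g (Real.exp M * d) := by
    have h2 : HasSum (fun j : ℕ => g (j + 1)) (Real.exp M * d) := h1
    have := (hasSum_nat_add_iff 1).mp h2
    simpa [hg] using this
  rw [exp_eq_tsum ℂ]
  beta_reduce
  rw [← Summable.tsum_sub (expSeries_summable' (𝕂 := ℂ) P) (expSeries_summable' (𝕂 := ℂ) Q)]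
  refine tsum_of_norm_bounded hgsum ?_
  intro k
  match k with
  | 0 => simp [hg]
  | (j+1) =>
    have : ((Nat.factorial (j+1) : ℂ))⁻¹ • P ^ (j+1) - ((Nat.factorial (j+1) : ℂ))⁻¹ • Q ^ (j+1)
        = ((Nat.factorial (j+1) : ℂ))⁻¹ • (P ^ (j+1) - Q ^ (j+1)) := (smul_sub _ _ _).symm
    rw [this, norm_smul]
    have hnorm : ‖((Nat.factorial (j+1) : ℂ))⁻¹‖ = ((Nat.factorial (j+1) : ℝ))⁻¹ := by
      rw [norm_inv]
      norm_cast
    rw [hnorm]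
    calc ((Nat.factorial (j+1) : ℝ))⁻¹ * ‖P ^ (j+1) - Q ^ (j+1)‖
        ≤ ((Nat.factorial (j+1) : ℝ))⁻¹ * ((j+1 : ℝ) * M ^ j * d) := by
          gcongr
          exact pow_sub_pow_norm_le P Q j
      _ = g (j+1) := by
          show _ = M ^ j / (Nat.factorial j : ℝ) * d
          rw [Nat.factorial_succ]
          push_cast
          have h0 : ((j:ℝ)+1) ≠ 0 := by positivity
          have h1 : ((Nat.factorial j : ℝ)) ≠ 0 := by positivity
          field_simp

lemma norm_exp_skew {n : ℕ} [Nonempty (Fin n)] (X : Matrix (Fin n) (Fin n) ℂ) (hX : Xᴴ = -X) :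
    ‖exp X‖ = 1 :=
  CStarRing.norm_of_mem_unitary (exp_mem_unitary_of_mem_skewAdjoint
    (by rw [skewAdjoint.mem_iff, Matrix.star_eq_conjTranspose, hX]))

lemma norm_pow_sub_pow_le_of_norm_le_one {R : Type*} [NormedRing R] {a b : R}
    (ha : ‖a‖ ≤ 1) (hb : ‖b‖ ≤ 1) (k : ℕ) : ‖a ^ (k+1) - b ^ (k+1)‖ ≤ (k+1 : ℝ) * ‖a - b‖ := by
  have := pow_sub_pow_norm_le a b k
  have hm : (max ‖a‖ ‖b‖) ^ k ≤ 1 := pow_le_one₀ (le_max_of_le_left (norm_nonneg a)) (max_le ha hb)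
  calc ‖a ^ (k+1) - b ^ (k+1)‖ ≤ (k+1 : ℝ) * (max ‖a‖ ‖b‖) ^ k * ‖a - b‖ := this
    _ ≤ (k+1 : ℝ) * 1 * ‖a - b‖ := by gcongr
    _ = (k+1 : ℝ) * ‖a - b‖ := by ring

lemma exp_skew_contract {n : ℕ} [Nonempty (Fin n)] (X Y : Matrix (Fin n) (Fin n) ℂ)
    (hX : Xᴴ = -X) (hY : Yᴴ = -Y) : ‖exp Y - exp X‖ ≤ ‖Y - X‖ := by
  set K := max ‖Y‖ ‖X‖ with hK
  have htend : Tendsto (fun m : ℕ => Real.exp (K / m) * ‖Y - X‖) atTop (𝓝 ‖Y - X‖) := by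
    have h0 : Tendsto (fun m : ℕ => K / m) atTop (𝓝 0) := tendsto_const_div_atTop_nhds_zero_nat K
    have := (Real.continuous_exp.tendsto 0).comp h0
    rw [Real.exp_zero] at this
    simpa using this.mul_const ‖Y - X‖
  refine ge_of_tendsto htend ?_
  filter_upwards [eventually_ge_atTop 1] with m hm
  obtain ⟨k, rfl⟩ : ∃ k, m = k + 1 := ⟨m - 1, by omega⟩
  set m := k + 1
  have hm0 : ((m : ℂ)) ≠ 0 := Nat.cast_ne_zero.mpr (Nat.succ_ne_zero k)
  set P := ((m : ℂ))⁻¹ • Y with hP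
  set Q := ((m : ℂ))⁻¹ • X with hQ
  have hskew : ∀ (W : Matrix (Fin n) (Fin n) ℂ), Wᴴ = -W → (((m : ℂ))⁻¹ • W)ᴴ = -(((m : ℂ))⁻¹ • W) := by
    intro W hW
    rw [Matrix.conjTranspose_smul, hW]
    simp [smul_neg]
  have hPs : Pᴴ = -P := hskew Y hY
  have hQs : Qᴴ = -Q := hskew X hX
  have hYm : Y = m • P := by
    rw [hP, ← Nat.cast_smul_eq_nsmul (R := ℂ), smul_smul, mul_inv_cancel₀ hm0, one_smul]
  have hXm : X = m • Q := by
    rw [hQ, ← Nat.cast_smul_eq_nsmul (R := ℂ), smul_smul, mul_inv_cancel₀ hm0, one_smul]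
  have hexpY : exp Y = (exp P) ^ m := by rw [hYm, NormedSpace.exp_nsmul]
  have hexpX : exp X = (exp Q) ^ m := by rw [hXm, NormedSpace.exp_nsmul]
  have hnormP : ‖P‖ = ‖Y‖ / m := by
    rw [hP, norm_smul, norm_inv, Complex.norm_natCast, div_eq_inv_mul]
  have hnormQ : ‖Q‖ = ‖X‖ / m := by
    rw [hQ, norm_smul, norm_inv, Complex.norm_natCast, div_eq_inv_mul]
  have hPQ : ‖P - Q‖ = ‖Y - X‖ / m := by
    rw [hP, hQ, ← smul_sub, norm_smul, norm_inv, Complex.norm_natCast, div_eq_inv_mul]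
  have hmax : max ‖P‖ ‖Q‖ = K / m := by
    rw [hnormP, hnormQ, hK, div_eq_inv_mul, div_eq_inv_mul, div_eq_inv_mul,
      ← mul_max_of_nonneg _ _ (by positivity : (0:ℝ) ≤ ((m:ℝ))⁻¹)]
  have hmpos : (0:ℝ) < m := by positivity
  calc ‖exp Y - exp X‖ = ‖(exp P) ^ m - (exp Q) ^ m‖ := by rw [hexpY, hexpX]
    _ ≤ (m : ℝ) * ‖exp P - exp Q‖ := by
        have := norm_pow_sub_pow_le_of_norm_le_one (a := exp P) (b := exp Q)
          (le_of_eq (norm_exp_skew P hPs)) (le_of_eq (norm_exp_skew Q hQs)) k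
        exact_mod_cast this
    _ ≤ (m : ℝ) * (Real.exp (max ‖P‖ ‖Q‖) * ‖P - Q‖) := by
        gcongr
        exact norm_exp_sub_exp_le P Q
    _ = Real.exp (K / m) * ‖Y - X‖ := by
        rw [hmax, hPQ]
        field_simp


lemma tendsto_sin_div : Tendsto (fun ε : ℝ => Real.sin ε / ε) (𝓝[>] 0) (𝓝 1) := by
  have h := Real.hasDerivAt_sin 0
  rw [Real.cos_zero] at h
  have h2 : Tendsto (slope Real.sin 0) (𝓝[≠] (0:ℝ)) (𝓝 1) := hasDerivAt_iff_tendsto_slope.mp h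
  have h3 : Tendsto (slope Real.sin 0) (𝓝[>] (0:ℝ)) (𝓝 1) :=
    h2.mono_left (nhdsWithin_mono 0 fun x hx => ne_of_gt hx)
  refine Tendsto.congr' ?_ h3
  filter_upwards [self_mem_nhdsWithin] with x _
  simp [slope_def_field]

lemma level1_limit {n : ℕ} [Nonempty (Fin n)] (X : Matrix (Fin n) (Fin n) ℂ) (hX : Xᴴ = -X) :
    Tendsto (fun ε : ℝ =>
        (sSup {r : ℝ | ∃ Y : Matrix (Fin n) (Fin n) ℂ, Yᴴ = -Y ∧ ‖Y - X‖ ≤ ε ∧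
          r = ‖exp Y - exp X‖}) / ε)
      (𝓝[>] 0) (𝓝 1) := by
  set S : ℝ → Set ℝ := fun ε => {r : ℝ | ∃ Y : Matrix (Fin n) (Fin n) ℂ, Yᴴ = -Y ∧ ‖Y - X‖ ≤ ε ∧
    r = ‖exp Y - exp X‖} with hS
  have hub : ∀ ε : ℝ, ∀ r ∈ S ε, r ≤ ε := by
    rintro ε r ⟨Y, hY, hle, rfl⟩
    exact (exp_skew_contract X Y hX hY).trans hle
  have h0mem : ∀ ε : ℝ, 0 ≤ ε → (0:ℝ) ∈ S ε := by
    intro ε hε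
    exact ⟨X, hX, by simpa using hε, by simp⟩
  have hrmem : ∀ ε : ℝ, 0 < ε → ‖Complex.exp ((ε:ℂ) * Complex.I) - 1‖ ∈ S ε := by
    intro ε hε
    set c : ℂ := (ε:ℂ) * Complex.I with hc
    refine ⟨X + c • 1, ?_, ?_, ?_⟩
    · rw [Matrix.conjTranspose_add, Matrix.conjTranspose_smul, Matrix.conjTranspose_one, hX]
      have hstar : star c = -c := by
        simp [hc, Complex.conj_I, mul_comm]
      rw [hstar, neg_smul, neg_add]
    · rw [add_sub_cancel_left, norm_smul]
      simp [hc, abs_of_pos hε, CStarRing.norm_one]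
    · have hcomm : Commute X (c • (1 : Matrix (Fin n) (Fin n) ℂ)) :=
        (Commute.one_right X).smul_right c
      have hexpadd : exp (X + c • (1 : Matrix (Fin n) (Fin n) ℂ))
          = exp X * exp (c • (1 : Matrix (Fin n) (Fin n) ℂ)) :=
        NormedSpace.exp_add_of_commute hcomm
      have hexpc : exp (c • (1 : Matrix (Fin n) (Fin n) ℂ)) = Complex.exp c • 1 := by
        rw [← Algebra.algebraMap_eq_smul_one, ← algebraMap_exp_comm,
          Algebra.algebraMap_eq_smul_one, Complex.exp_eq_exp_ℂ]
      rw [hexpadd, hexpc, mul_smul_comm, mul_one]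
      rw [show Complex.exp c • exp X - exp X
            = (Complex.exp c - 1) • exp X by rw [sub_smul, one_smul]]
      rw [norm_smul, norm_exp_skew X hX, mul_one]
  have hsinle : ∀ ε : ℝ, 0 < ε → Real.sin ε ≤ ‖Complex.exp ((ε:ℂ) * Complex.I) - 1‖ := by
    intro ε hε
    have him : (Complex.exp ((ε:ℂ) * Complex.I) - 1).im = Real.sin ε := by
      simp [Complex.exp_ofReal_mul_I_im]
    calc Real.sin ε = (Complex.exp ((ε:ℂ) * Complex.I) - 1).im := him.symm
      _ ≤ |(Complex.exp ((ε:ℂ) * Complex.I) - 1).im| := le_abs_self _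
      _ ≤ ‖Complex.exp ((ε:ℂ) * Complex.I) - 1‖ := Complex.abs_im_le_norm _
      _ = ‖Complex.exp ((ε:ℂ) * Complex.I) - 1‖ := rfl
  refine tendsto_of_tendsto_of_tendsto_of_le_of_le' tendsto_sin_div tendsto_const_nhds ?_ ?_
  · filter_upwards [self_mem_nhdsWithin] with ε (hε : 0 < ε)
    have h1 : Real.sin ε ≤ sSup (S ε) :=
      (hsinle ε hε).trans (le_csSup ⟨ε, hub ε⟩ (hrmem ε hε))
    gcongr
  · filter_upwards [self_mem_nhdsWithin] with ε (hε : 0 < ε)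
    exact (div_le_one hε).mpr (csSup_le ⟨0, h0mem ε hε.le⟩ (hub ε))

/-- Proposition 3.2 of the paper. If `c X` is the structured level-1 condition
number (in the spectral norm) of the matrix exponential at a skew-Hermitian `X`, with
skew-Hermitian perturbations, then the structured level-2 condition number of the matrix
exponential at a skew-Hermitian `A` is `0`. -/
theorem structured_level2_condition_number_exp_skewHermitian
    (n : ℕ) (hn : 1 ≤ n)
    (A : Matrix (Fin n) (Fin n) ℂ) (hA : Aᴴ = -A)
    (c : Matrix (Fin n) (Fin n) ℂ → ℝ)
    (hc : ∀ X : Matrix (Fin n) (Fin n) ℂ, Xᴴ = -X →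
      Tendsto (fun ε : ℝ =>
          (sSup {r : ℝ | ∃ Y : Matrix (Fin n) (Fin n) ℂ, Yᴴ = -Y ∧ ‖Y - X‖ ≤ ε ∧
            r = ‖NormedSpace.exp Y - NormedSpace.exp X‖}) / ε)
        (𝓝[>] 0) (𝓝 (c X))) :
    Tendsto (fun ε : ℝ =>
        (sSup {r : ℝ | ∃ Z : Matrix (Fin n) (Fin n) ℂ, Zᴴ = -Z ∧ ‖Z‖ ≤ ε ∧
          r = |c (A + Z) - c A|}) / ε)
      (𝓝[>] 0) (𝓝 0) := by
  haveI : Nonempty (Fin n) := Fin.pos_iff_nonempty.mp hn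
  have hconst : ∀ X : Matrix (Fin n) (Fin n) ℂ, Xᴴ = -X → c X = 1 := fun X hXs =>
    tendsto_nhds_unique (hc X hXs) (level1_limit X hXs)
  have heq : ∀ᶠ ε in 𝓝[>] (0:ℝ),
      (sSup {r : ℝ | ∃ Z : Matrix (Fin n) (Fin n) ℂ, Zᴴ = -Z ∧ ‖Z‖ ≤ ε ∧
        r = |c (A + Z) - c A|}) / ε = 0 := by
    filter_upwards [self_mem_nhdsWithin] with ε (hε : 0 < ε)
    have hset : {r : ℝ | ∃ Z : Matrix (Fin n) (Fin n) ℂ, Zᴴ = -Z ∧ ‖Z‖ ≤ ε ∧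
        r = |c (A + Z) - c A|} = {0} := by
      ext r
      constructor
      · rintro ⟨Z, hZ, hle, rfl⟩
        have hAZ : (A + Z)ᴴ = -(A + Z) := by
          rw [Matrix.conjTranspose_add, hA, hZ, neg_add]
        simp [hconst _ hAZ, hconst _ hA]
      · intro hr
        rw [Set.mem_singleton_iff] at hr
        subst hr
        exact ⟨0, by simp, by simp [hε.le], by simp⟩
    rw [hset, csSup_singleton, zero_div]
  exact Tendsto.congr' (EventuallyEq.symm heq) tendsto_const_nhds
end

section
/- Let n ≥ 1 and let A ∈ ℂ^{n×n} be skew-Hermitian. Then the quantity sup{‖exp(Y) − exp(A)‖₂ : Y skew-Hermitian, ‖Y − A‖₂ ≤ ε}/ε tends to 1 as ε → 0⁺; that is, the structured level-1 condition number of the matrix exponential at A in the spectral norm, with perturbations restricted to skew-Hermitian matrices, equals 1. -/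
open Filter Topology Matrix
open scoped Matrix.Norms.L2Operator

section Aux

variable {n : ℕ}

lemma aux_exp_mem_unitary {B : Matrix (Fin n) (Fin n) ℂ} (hB : Bᴴ = -B) :
    NormedSpace.exp B ∈ unitary (Matrix (Fin n) (Fin n) ℂ) := by
  have h1 : (NormedSpace.exp B)ᴴ = NormedSpace.exp (-B) := by
    rw [← Matrix.exp_conjTranspose, hB]
  rw [Unitary.mem_iff]
  constructor
  · rw [Matrix.star_eq_conjTranspose, h1,
      ← Matrix.exp_add_of_commute _ _ (Commute.neg_left (Commute.refl B)),
      neg_add_cancel, NormedSpace.exp_zero]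
  · rw [Matrix.star_eq_conjTranspose, h1,
      ← Matrix.exp_add_of_commute _ _ (Commute.neg_right (Commute.refl B)),
      add_neg_cancel, NormedSpace.exp_zero]

lemma aux_smul_skew {B : Matrix (Fin n) (Fin n) ℂ} (hB : Bᴴ = -B) (t : ℝ) :
    (t • B)ᴴ = -(t • B) := by
  rw [Matrix.conjTranspose_smul, hB, star_trivial, smul_neg]

lemma aux_lip {B Y : Matrix (Fin n) (Fin n) ℂ} (hB : Bᴴ = -B) (hY : Yᴴ = -Y) :
    ‖NormedSpace.exp Y - NormedSpace.exp B‖ ≤ ‖Y - B‖ := by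
  have hexp : (NormedSpace.exp : Matrix (Fin n) (Fin n) ℂ → Matrix (Fin n) (Fin n) ℂ)
      = NormedSpace.exp := rfl
  set f : ℝ → Matrix (Fin n) (Fin n) ℂ :=
    fun t => NormedSpace.exp (t • Y) * NormedSpace.exp ((1 - t) • B) with hf
  set f' : ℝ → Matrix (Fin n) (Fin n) ℂ :=
    fun t => NormedSpace.exp (t • Y) * (Y - B) * NormedSpace.exp ((1 - t) • B) with hf'
  have hderiv : ∀ t : ℝ, HasDerivAt f (f' t) t := by
    intro t
    have h1 : HasDerivAt (fun u : ℝ => NormedSpace.exp (u • Y))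
        (NormedSpace.exp (t • Y) * Y) t := by
      simpa [hexp] using hasDerivAt_exp_smul_const (𝕂 := ℝ) Y t
    have h2' : HasDerivAt (fun u : ℝ => NormedSpace.exp (u • B))
        (NormedSpace.exp ((1 - t) • B) * B) (1 - t) := by
      simpa [hexp] using hasDerivAt_exp_smul_const (𝕂 := ℝ) B (1 - t)
    have hg : HasDerivAt (fun u : ℝ => 1 - u) (-1 : ℝ) t := by
      simpa using (hasDerivAt_id t).const_sub (1 : ℝ)
    have h2 : HasDerivAt (fun u : ℝ => NormedSpace.exp ((1 - u) • B))
        ((-1 : ℝ) • (NormedSpace.exp ((1 - t) • B) * B)) t := h2'.scomp t hg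
    have hcomm : NormedSpace.exp ((1 - t) • B) * B = B * NormedSpace.exp ((1 - t) • B) :=
      (((Commute.refl B).smul_right ((1 : ℝ) - t)).exp_right).symm.eq
    have := h1.mul h2
    refine this.congr_deriv ?_
    rw [neg_one_smul, hcomm]
    simp only [hf']
    noncomm_ring
  have hbound : ∀ t : ℝ, t ∈ Set.Icc (0:ℝ) 1 → ‖f' t‖ ≤ ‖Y - B‖ := by
    intro t _
    have hu1 := aux_exp_mem_unitary (aux_smul_skew hY t)
    have hu2 := aux_exp_mem_unitary (aux_smul_skew hB (1 - t))
    simp only [hf']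
    rw [mul_assoc, CStarRing.norm_mem_unitary_mul _ hu1, CStarRing.norm_mul_mem_unitary _ hu2]
  have := (convex_Icc (0:ℝ) 1).norm_image_sub_le_of_norm_hasDerivWithin_le
    (fun x _ => (hderiv x).hasDerivWithinAt) hbound
    (Set.left_mem_Icc.mpr zero_le_one) (Set.right_mem_Icc.mpr zero_le_one)
  have hf1 : f 1 = NormedSpace.exp Y := by simp [hf, NormedSpace.exp_zero]
  have hf0 : f 0 = NormedSpace.exp B := by simp [hf, NormedSpace.exp_zero]
  rw [hf1, hf0] at this
  simpa using this

end Aux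

/-- key step in the proof of Proposition 3.2 of the paper. The structured
level-1 condition number of the matrix exponential at a skew-Hermitian matrix `A`, in the
spectral norm and with skew-Hermitian perturbations, equals `1`. -/
theorem structured_level1_condition_number_exp_skewHermitian
    (n : ℕ) (hn : 1 ≤ n)
    (A : Matrix (Fin n) (Fin n) ℂ) (hA : Aᴴ = -A) :
    Tendsto (fun ε : ℝ =>
        (sSup {r : ℝ | ∃ Y : Matrix (Fin n) (Fin n) ℂ, Yᴴ = -Y ∧ ‖Y - A‖ ≤ ε ∧
          r = ‖NormedSpace.exp Y - NormedSpace.exp A‖}) / ε)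
      (𝓝[>] 0) (𝓝 1) := by
  haveI : Nonempty (Fin n) := ⟨⟨0, hn⟩⟩
  haveI : Nontrivial (Matrix (Fin n) (Fin n) ℂ) := by
    refine ⟨0, 1, fun h => zero_ne_one (α := ℂ) ?_⟩
    simpa using congr_arg (fun M : Matrix (Fin n) (Fin n) ℂ => M ⟨0, hn⟩ ⟨0, hn⟩) h
  have hexpA := aux_exp_mem_unitary hA
  have main : ∀ ε : ℝ, ε ∈ Set.Ioi (0:ℝ) →
      ‖Complex.exp (ε • Complex.I) - 1‖ / ε ≤
        (sSup {r : ℝ | ∃ Y : Matrix (Fin n) (Fin n) ℂ, Yᴴ = -Y ∧ ‖Y - A‖ ≤ ε ∧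
          r = ‖NormedSpace.exp Y - NormedSpace.exp A‖}) / ε ∧
      (sSup {r : ℝ | ∃ Y : Matrix (Fin n) (Fin n) ℂ, Yᴴ = -Y ∧ ‖Y - A‖ ≤ ε ∧
          r = ‖NormedSpace.exp Y - NormedSpace.exp A‖}) / ε ≤ 1 := by
    intro ε hε
    rw [Set.mem_Ioi] at hε
    set S : Set ℝ := {r : ℝ | ∃ Y : Matrix (Fin n) (Fin n) ℂ, Yᴴ = -Y ∧ ‖Y - A‖ ≤ ε ∧
          r = ‖NormedSpace.exp Y - NormedSpace.exp A‖} with hS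
    have hbdd : BddAbove S := by
      refine ⟨ε, fun r hr => ?_⟩
      obtain ⟨Y, hY, hle, rfl⟩ := hr
      exact (aux_lip hA hY).trans hle
    have hne : S.Nonempty := ⟨0, A, hA, by simp [hε.le], by simp⟩
    set c : ℂ := ε • Complex.I with hc
    have hstarc : star c = -c := by
      rw [hc, star_smul, Complex.star_def, Complex.conj_I, star_trivial, smul_neg]
    set Y : Matrix (Fin n) (Fin n) ℂ := A + c • 1 with hYdef
    have hYskew : Yᴴ = -Y := by
      rw [hYdef, Matrix.conjTranspose_add, Matrix.conjTranspose_smul, Matrix.conjTranspose_one,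
        hA, hstarc, neg_add, neg_smul]
    have hYA : Y - A = c • 1 := by rw [hYdef]; abel
    have hnormc : ‖c‖ = ε := by
      rw [hc, norm_smul, Complex.norm_I, Real.norm_eq_abs, abs_of_pos hε, mul_one]
    have hnormYA : ‖Y - A‖ ≤ ε := by
      rw [hYA, norm_smul, norm_one, mul_one, hnormc]
    have hexpc : NormedSpace.exp (c • (1 : Matrix (Fin n) (Fin n) ℂ))
        = Complex.exp c • 1 := by
      rw [← Algebra.algebraMap_eq_smul_one, ← NormedSpace.algebraMap_exp_comm,
        Algebra.algebraMap_eq_smul_one, Complex.exp_eq_exp_ℂ]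
    have hexpY : NormedSpace.exp Y = Complex.exp c • NormedSpace.exp A := by
      rw [hYdef, Matrix.exp_add_of_commute _ _ ((Commute.one_right A).smul_right c), hexpc,
        mul_smul_comm, mul_one]
    have hmem : ‖Complex.exp c - 1‖ ∈ S := by
      refine ⟨Y, hYskew, hnormYA, ?_⟩
      have hsub : Complex.exp c • NormedSpace.exp A - NormedSpace.exp A
          = (Complex.exp c - 1) • NormedSpace.exp A := by rw [sub_smul, one_smul]
      rw [hexpY, hsub, norm_smul, CStarRing.norm_of_mem_unitary hexpA, mul_one]
    constructor
    · exact (div_le_div_iff_of_pos_right hε).mpr (le_csSup hbdd hmem)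
    · rw [div_le_one hε]
      refine csSup_le hne fun r hr => ?_
      obtain ⟨Z, hZ, hle, rfl⟩ := hr
      exact (aux_lip hA hZ).trans hle
  have hlow : Tendsto (fun ε : ℝ => ‖Complex.exp (ε • Complex.I) - 1‖ / ε) (𝓝[>] 0) (𝓝 1) := by
    have hd : HasDerivAt (fun t : ℝ => Complex.exp (t • Complex.I)) Complex.I 0 := by
      have h1 : HasDerivAt (fun t : ℝ => t • Complex.I) ((1:ℝ) • Complex.I) 0 :=
        (hasDerivAt_id (0:ℝ)).smul_const Complex.I
      simpa using h1.cexp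
    have hslope := hasDerivAt_iff_tendsto_slope.mp hd
    have hnorm : Tendsto (fun t : ℝ => ‖slope (fun t : ℝ => Complex.exp (t • Complex.I)) 0 t‖)
        (𝓝[≠] (0:ℝ)) (𝓝 1) := by
      simpa using hslope.norm
    have hmono : (𝓝[>] (0:ℝ)) ≤ 𝓝[≠] (0:ℝ) :=
      nhdsWithin_mono 0 fun x hx => ne_of_gt hx
    refine Tendsto.congr' ?_ (hnorm.mono_left hmono)
    filter_upwards [self_mem_nhdsWithin] with t ht
    rw [Set.mem_Ioi] at ht
    rw [slope_def_module]
    simp [norm_smul, abs_of_pos ht, div_eq_inv_mul]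
  exact tendsto_of_tendsto_of_tendsto_of_le_of_le' hlow tendsto_const_nhds
    (eventually_nhdsWithin_of_forall fun ε hε => (main ε hε).1)
    (eventually_nhdsWithin_of_forall fun ε hε => (main ε hε).2)
end

section
/- Let n ≥ 1 and let A ∈ ℂ^{n×n} be skew-Hermitian. Then ‖exp(A + iεI) − exp(A)‖₂ / ε tends to 1 as the real parameter ε → 0⁺, where I denotes the n×n identity matrix and i the imaginary unit. -/
open Filter Topology Matrix
open scoped Matrix.Norms.L2Operator

/-- equation (3.6) of the paper. For a skew-Hermitian matrix `A`, the spectral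
norm of `exp(A + iεI) − exp(A)`, divided by `ε`, tends to `1` as `ε → 0⁺`. -/
theorem exp_skewHermitian_perturbation_limit
    (n : ℕ) (hn : 1 ≤ n)
    (A : Matrix (Fin n) (Fin n) ℂ) (hA : Aᴴ = -A) :
    Tendsto (fun ε : ℝ =>
        ‖NormedSpace.exp (A + ((ε : ℂ) * Complex.I) • (1 : Matrix (Fin n) (Fin n) ℂ)) -
            NormedSpace.exp A‖ / ε)
      (𝓝[>] 0) (𝓝 1) := by
  haveI : Nonempty (Fin n) := ⟨⟨0, hn⟩⟩
  let +nondep : NormedAlgebra ℚ (Matrix (Fin n) (Fin n) ℂ) := .restrictScalars ℚ ℂ _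
  -- `exp A` is unitary
  have hU : NormedSpace.exp A ∈ unitary (Matrix (Fin n) (Fin n) ℂ) :=
    NormedSpace.exp_mem_unitary_of_mem_skewAdjoint (skewAdjoint.mem_iff.mpr hA)
  have hnormU : ‖NormedSpace.exp A‖ = 1 := CStarRing.norm_of_mem_unitary hU
  -- key identity
  have key : ∀ c : ℂ,
      NormedSpace.exp (A + c • (1 : Matrix (Fin n) (Fin n) ℂ)) =
        Complex.exp c • NormedSpace.exp A := by
    intro c
    have hc : Commute A (c • (1 : Matrix (Fin n) (Fin n) ℂ)) :=
      (Commute.one_right A).smul_right c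
    rw [NormedSpace.exp_add_of_commute hc]
    have h1 : c • (1 : Matrix (Fin n) (Fin n) ℂ) = algebraMap ℂ _ c := by
      simp [Algebra.algebraMap_eq_smul_one]
    rw [h1, ← NormedSpace.algebraMap_exp_comm]
    simp [Algebra.algebraMap_eq_smul_one, mul_smul_comm, ← Complex.exp_eq_exp_ℂ]
  -- rewrite the norm
  have heq : ∀ ε : ℝ, 0 < ε →
      ‖NormedSpace.exp (A + ((ε : ℂ) * Complex.I) • (1 : Matrix (Fin n) (Fin n) ℂ)) -
          NormedSpace.exp A‖ / ε =
        ‖(Complex.exp ((ε : ℂ) * Complex.I) - 1) / ε‖ := by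
    intro ε hε
    rw [key, show Complex.exp ((ε : ℂ) * Complex.I) • NormedSpace.exp A - NormedSpace.exp A =
      (Complex.exp ((ε : ℂ) * Complex.I) - 1) • NormedSpace.exp A by rw [sub_smul, one_smul],
      norm_smul, hnormU, mul_one, norm_div]
    simp [abs_of_pos hε]
  have hderiv : HasDerivAt (fun t : ℝ => Complex.exp ((t : ℂ) * Complex.I)) Complex.I 0 := by
    have h1 : HasDerivAt (fun t : ℝ => (t : ℂ)) 1 0 := Complex.ofRealCLM.hasDerivAt
    have h2 : HasDerivAt (fun t : ℝ => (t : ℂ) * Complex.I) Complex.I 0 := by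
      simpa using h1.mul_const Complex.I
    have h3 := (Complex.hasDerivAt_exp ((0 : ℂ) * Complex.I)).comp 0 h2
    simpa [Function.comp_def] using h3
  have hslope : Tendsto (fun ε : ℝ => (Complex.exp ((ε : ℂ) * Complex.I) - 1) / ε)
      (𝓝[>] 0) (𝓝 Complex.I) := by
    have h0 := hasDerivWithinAt_iff_tendsto_slope.mp (hderiv.hasDerivWithinAt (s := Set.Ioi (0:ℝ)))
    have hset : Set.Ioi (0:ℝ) \ {0} = Set.Ioi 0 := by
      ext x; simp only [Set.mem_diff, Set.mem_Ioi, Set.mem_singleton_iff, and_iff_left_iff_imp]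
      exact fun hx => ne_of_gt hx
    rw [hset] at h0
    refine h0.congr' ?_
    filter_upwards [self_mem_nhdsWithin] with x hx
    simp only [Set.mem_Ioi] at hx
    rw [slope_def_module]
    simp [Complex.exp_zero, Complex.real_smul, div_eq_inv_mul]
  have hnorm : Tendsto (fun ε : ℝ => ‖(Complex.exp ((ε : ℂ) * Complex.I) - 1) / ε‖)
      (𝓝[>] 0) (𝓝 1) := by
    have := (continuous_norm.tendsto Complex.I).comp hslope
    simpa only [Function.comp_def, Complex.norm_I] using this
  refine hnorm.congr' ?_
  filter_upwards [self_mem_nhdsWithin] with ε hε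
  exact (heq ε hε).symm
end

section
/- Let n ≥ 1 and let A ∈ ℂ^{n×n} be Hermitian with largest eigenvalue λmax(A). Suppose c is a real-valued function on complex n×n matrices such that for every Hermitian X, the quantity sup{‖exp(Y) − exp(X)‖₂ : Y Hermitian, ‖Y − X‖₂ ≤ ε}/ε tends to c(X) as ε → 0⁺ (i.e., c is the structured level-1 condition number of the matrix exponential in the spectral norm, with Hermitian perturbations). Then sup{|c(A+Z) − c(A)| : Z Hermitian, ‖Z‖₂ ≤ ε}/ε tends to e^{λmax(A)} as ε → 0⁺; that is, the structured level-2 condition number of the matrix exponential at A in the spectral norm equals e^{λmax(A)}. -/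
open Filter Topology Matrix
open scoped Matrix.Norms.L2Operator

namespace StructLevel2Aux

open NormedSpace

variable {n : ℕ} [NeZero n]

noncomputable local instance : CStarAlgebra (Matrix (Fin n) (Fin n) ℂ) := {}

/-- The largest eigenvalue, as the supremum of the real spectrum. -/
noncomputable def lmax (a : Matrix (Fin n) (Fin n) ℂ) : ℝ := sSup (spectrum ℝ a)

variable {a b X Y : Matrix (Fin n) (Fin n) ℂ}

lemma spec_nonempty (ha : IsSelfAdjoint a) : (spectrum ℝ a).Nonempty := by
  have ha' : a.IsHermitian := ha
  rw [ha'.spectrum_real_eq_range_eigenvalues]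
  exact Set.range_nonempty _

lemma spec_bddAbove : BddAbove (spectrum ℝ a) := (Matrix.finite_real_spectrum (A := a)).bddAbove

lemma le_norm_of_mem {x : ℝ} (hx : x ∈ spectrum ℝ a) : x ≤ ‖a‖ := by
  have := spectrum.norm_le_norm_of_mem hx
  rw [Real.norm_eq_abs] at this
  exact (abs_le.mp this).2

lemma neg_norm_le_of_mem {x : ℝ} (hx : x ∈ spectrum ℝ a) : -‖a‖ ≤ x := by
  have := spectrum.norm_le_norm_of_mem hx
  rw [Real.norm_eq_abs] at this
  exact (abs_le.mp this).1

lemma lmax_le_norm (ha : IsSelfAdjoint a) : lmax a ≤ ‖a‖ :=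
  csSup_le (spec_nonempty ha) fun _ hx => le_norm_of_mem hx

lemma le_lmax_of_mem {x : ℝ} (hx : x ∈ spectrum ℝ a) : x ≤ lmax a :=
  le_csSup spec_bddAbove hx

lemma norm_eq_lmax_of_nonneg_spec (ha : IsSelfAdjoint a)
    (h : ∀ x ∈ spectrum ℝ a, 0 ≤ x) : ‖a‖ = lmax a := by
  rcases CStarAlgebra.norm_or_neg_norm_mem_spectrum ha with hm | hm
  · exact le_antisymm (le_lmax_of_mem hm) (lmax_le_norm ha)
  · have h0 : ‖a‖ = 0 := le_antisymm (by linarith [h _ hm]) (norm_nonneg a)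
    rw [h0]
    refine le_antisymm ?_ ?_
    · obtain ⟨x, hx⟩ := spec_nonempty ha
      exact le_csSup_of_le spec_bddAbove hx (h _ hx)
    · exact csSup_le (spec_nonempty ha) fun x hx => h0 ▸ le_norm_of_mem hx

lemma lmax_add_algebraMap (ha : IsSelfAdjoint a) (r : ℝ) :
    lmax (a + algebraMap ℝ _ r) = lmax a + r := by
  have hs : spectrum ℝ (a + algebraMap ℝ _ r) = (fun x => x + r) '' spectrum ℝ a := by
    rw [← spectrum.add_singleton_eq, Set.add_singleton]
  have := Monotone.map_csSup_of_continuousAt (f := fun x : ℝ => x + r)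
    (continuous_id.add continuous_const).continuousAt
    (monotone_id.add_const r) (spec_nonempty ha) spec_bddAbove
  rw [lmax, lmax, hs, ← this]

lemma isSelfAdjoint_algebraMap' (r : ℝ) :
    IsSelfAdjoint (algebraMap ℝ (Matrix (Fin n) (Fin n) ℂ) r) := by
  exact IsSelfAdjoint.algebraMap _ (star_trivial r)

lemma norm_add_algebraMap (ha : IsSelfAdjoint a) {r : ℝ} (hr : ‖a‖ ≤ r) :
    ‖a + algebraMap ℝ _ r‖ = lmax a + r := by
  rw [← lmax_add_algebraMap ha r]
  refine norm_eq_lmax_of_nonneg_spec (ha.add (isSelfAdjoint_algebraMap' r)) fun x hx => ?_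
  rw [← spectrum.add_singleton_eq, Set.add_singleton] at hx
  obtain ⟨y, hy, rfl⟩ := hx
  have := neg_norm_le_of_mem hy
  show 0 ≤ y + r
  linarith

lemma lmax_add_le (ha : IsSelfAdjoint a) (hb : IsSelfAdjoint b) :
    lmax (a + b) ≤ lmax a + ‖b‖ := by
  set R := ‖a‖ + ‖b‖ with hR
  have hab : IsSelfAdjoint (a + b) := ha.add hb
  have h1 : ‖a + b + algebraMap ℝ _ R‖ = lmax (a + b) + R :=
    norm_add_algebraMap hab (norm_add_le a b)
  have h2 : ‖a + algebraMap ℝ _ R‖ = lmax a + R :=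
    norm_add_algebraMap ha (le_add_of_nonneg_right (norm_nonneg b))
  have h3 : a + b + algebraMap ℝ _ R = (a + algebraMap ℝ _ R) + b := by abel
  have h4 : ‖a + b + algebraMap ℝ _ R‖ ≤ ‖a + algebraMap ℝ _ R‖ + ‖b‖ := by
    rw [h3]; exact norm_add_le _ _
  rw [h1, h2] at h4
  linarith

lemma abs_lmax_sub_le (ha : IsSelfAdjoint a) (hb : IsSelfAdjoint b) :
    |lmax (a + b) - lmax a| ≤ ‖b‖ := by
  rw [abs_le]
  constructor
  · have := lmax_add_le (ha.add hb) hb.neg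
    simp only [add_neg_cancel_right, norm_neg] at this
    linarith
  · linarith [lmax_add_le ha hb]

lemma exp_eq_cfc (ha : IsSelfAdjoint a) : exp a = cfc Real.exp a := by
  rw [CFC.real_exp_eq_normedSpace_exp ha]

lemma norm_exp_eq (ha : IsSelfAdjoint a) : ‖exp a‖ = Real.exp (lmax a) := by
  rw [exp_eq_cfc ha]
  have hsa : IsSelfAdjoint (cfc Real.exp a) := cfc_predicate _ a
  have hspec : spectrum ℝ (cfc Real.exp a) = Real.exp '' spectrum ℝ a :=
    cfc_map_spectrum Real.exp a
  have h1 : ‖cfc Real.exp a‖ = lmax (cfc Real.exp a) := by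
    refine norm_eq_lmax_of_nonneg_spec hsa fun x hx => ?_
    rw [hspec] at hx
    obtain ⟨y, -, rfl⟩ := hx
    exact (Real.exp_pos y).le
  rw [h1, lmax, hspec,
    ← Monotone.map_csSup_of_continuousAt Real.continuous_exp.continuousAt Real.exp_monotone
      (spec_nonempty ha) spec_bddAbove]
  rfl

lemma lmax_smul (ha : IsSelfAdjoint a) {t : ℝ} (ht : 0 ≤ t) : lmax (t • a) = t * lmax a := by
  open scoped Pointwise in
  rcases eq_or_lt_of_le ht with rfl | ht
  · simp only [zero_smul, zero_mul, lmax, spectrum.zero_eq, csSup_singleton]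
  · have hs : spectrum ℝ (t • a) = t • spectrum ℝ a :=
      spectrum.smul_eq_smul t a (spec_nonempty ha)
    have himg : t • spectrum ℝ a = (fun x : ℝ => t * x) '' spectrum ℝ a := by
      ext x; simp [Set.mem_smul_set, smul_eq_mul]
    have := Monotone.map_csSup_of_continuousAt (f := fun x : ℝ => t * x)
      (continuous_const.mul continuous_id).continuousAt
      (fun x y hxy => by dsimp; nlinarith) (spec_nonempty ha) spec_bddAbove
    rw [lmax, hs, himg, ← this]; rfl

lemma isSelfAdjoint_real_smul (ha : IsSelfAdjoint a) (t : ℝ) : IsSelfAdjoint (t • a) :=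
  IsSelfAdjoint.smul (star_trivial t) ha

lemma exp_add_algebraMap (X : Matrix (Fin n) (Fin n) ℂ) (r : ℝ) :
    exp (X + algebraMap ℝ _ r) = Real.exp r • exp X := by
  have hcomm : Commute X (algebraMap ℝ _ r) := Algebra.commute_algebraMap_right r X
  let _ : NormedAlgebra ℚ (Matrix (Fin n) (Fin n) ℂ) := NormedAlgebra.restrictScalars ℚ ℂ _
  rw [NormedSpace.exp_add_of_commute hcomm,
    ← algebraMap_exp_comm, ← Real.exp_eq_exp_ℝ, Algebra.algebraMap_eq_smul_one,
    mul_smul_comm, mul_one]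

lemma norm_exp_sub_exp_le (hX : IsSelfAdjoint X) (hY : IsSelfAdjoint Y) :
    ‖exp Y - exp X‖ ≤ ‖Y - X‖ * Real.exp (max (lmax X) (lmax Y)) := by
  set f : ℝ → Matrix (Fin n) (Fin n) ℂ :=
    fun t => exp (t • Y) * exp ((1 - t) • X) with hf_def
  set f' : ℝ → Matrix (Fin n) (Fin n) ℂ :=
    fun t => exp (t • Y) * (Y - X) * exp ((1 - t) • X) with hf'_def
  have hderiv : ∀ t : ℝ, HasDerivAt f (f' t) t := by
    intro t
    have h1 : HasDerivAt (fun u : ℝ => exp (u • Y)) (exp (t • Y) * Y) t :=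
      hasDerivAt_exp_smul_const (𝕂 := ℝ) Y t
    have hinner : HasDerivAt (fun u : ℝ => 1 - u) (-1 : ℝ) t := by
      simpa using (hasDerivAt_id t).const_sub (1 : ℝ)
    have houter : HasDerivAt (fun u : ℝ => exp (u • X)) (exp ((1 - t) • X) * X) (1 - t) :=
      hasDerivAt_exp_smul_const (𝕂 := ℝ) X (1 - t)
    have h2 : HasDerivAt (fun u : ℝ => exp ((1 - u) • X))
        ((-1 : ℝ) • (exp ((1 - t) • X) * X)) t := HasDerivAt.scomp t houter hinner
    have h3 := h1.mul h2
    refine h3.congr_deriv ?_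
    have hcomm : exp ((1 - t) • X) * X = X * exp ((1 - t) • X) :=
      (Commute.exp_left ((Commute.refl X).smul_left (1 - t))).eq
    simp only [hf'_def, neg_one_smul, mul_neg, hcomm]
    noncomm_ring
  have bound : ∀ t ∈ Set.Ico (0 : ℝ) 1,
      ‖f' t‖ ≤ ‖Y - X‖ * Real.exp (max (lmax X) (lmax Y)) := by
    intro t ht
    obtain ⟨ht0, ht1⟩ := ht
    have e1 : ‖exp (t • Y)‖ = Real.exp (t * lmax Y) := by
      rw [norm_exp_eq (isSelfAdjoint_real_smul hY t), lmax_smul hY ht0]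
    have e2 : ‖exp ((1 - t) • X)‖ = Real.exp ((1 - t) * lmax X) := by
      rw [norm_exp_eq (isSelfAdjoint_real_smul hX (1 - t)), lmax_smul hX (by linarith)]
    have hle : ‖f' t‖ ≤ ‖exp (t • Y)‖ * ‖Y - X‖ * ‖exp ((1 - t) • X)‖ :=
      (norm_mul_le _ _).trans (mul_le_mul_of_nonneg_right (norm_mul_le _ _) (norm_nonneg _))
    rw [e1, e2] at hle
    refine hle.trans ?_
    have hexp : Real.exp (t * lmax Y) * Real.exp ((1 - t) * lmax X)
        ≤ Real.exp (max (lmax X) (lmax Y)) := by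
      rw [← Real.exp_add]
      apply Real.exp_le_exp.mpr
      nlinarith [le_max_left (lmax X) (lmax Y), le_max_right (lmax X) (lmax Y)]
    calc Real.exp (t * lmax Y) * ‖Y - X‖ * Real.exp ((1 - t) * lmax X)
        = ‖Y - X‖ * (Real.exp (t * lmax Y) * Real.exp ((1 - t) * lmax X)) := by ring
      _ ≤ ‖Y - X‖ * Real.exp (max (lmax X) (lmax Y)) :=
          mul_le_mul_of_nonneg_left hexp (norm_nonneg _)
  have hmvt := norm_image_sub_le_of_norm_deriv_le_segment'
    (f := f) (f' := f') (a := 0) (b := 1) (C := ‖Y - X‖ * Real.exp (max (lmax X) (lmax Y)))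
    (fun x _ => (hderiv x).hasDerivWithinAt) bound 1 (by norm_num)
  have hf1 : f 1 = exp Y := by simp [hf_def, exp_zero]
  have hf0 : f 0 = exp X := by simp [hf_def, exp_zero]
  rw [hf1, hf0] at hmvt
  simpa using hmvt

lemma exp_abs_sub_le {l m e : ℝ} (h : |m - l| ≤ e) :
    |Real.exp m - Real.exp l| ≤ Real.exp l * (Real.exp e - 1) := by
  obtain ⟨h1, h2⟩ := abs_le.mp h
  rw [abs_le]
  constructor
  · have hm : Real.exp (l - e) ≤ Real.exp m := Real.exp_le_exp.mpr (by linarith)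
    have : Real.exp (l - e) = Real.exp l * Real.exp (-e) := by
      rw [← Real.exp_add]; ring_nf
    have huv : Real.exp e * Real.exp (-e) = 1 := by
      rw [← Real.exp_add]; simp
    nlinarith [Real.exp_pos e, Real.exp_pos (-e), sq_nonneg (Real.exp e - 1),
      Real.exp_pos l]
  · have hm : Real.exp m ≤ Real.exp (l + e) := Real.exp_le_exp.mpr (by linarith)
    have : Real.exp (l + e) = Real.exp l * Real.exp e := Real.exp_add l e
    nlinarith

section LevelOne

variable (X : Matrix (Fin n) (Fin n) ℂ)

/-- The level-1 supremum set. -/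
def S (ε : ℝ) : Set ℝ :=
  {r : ℝ | ∃ Y : Matrix (Fin n) (Fin n) ℂ, Y.IsHermitian ∧ ‖Y - X‖ ≤ ε ∧
    r = ‖exp Y - exp X‖}

variable {X}

lemma S_ub (hX : IsSelfAdjoint X) {ε : ℝ} (hε : 0 ≤ ε) :
    ∀ r ∈ S X ε, r ≤ ε * Real.exp (lmax X + ε) := by
  rintro r ⟨Y, hY, hYX, rfl⟩
  have hY' : IsSelfAdjoint Y := hY
  have h1 : ‖exp Y - exp X‖ ≤ ‖Y - X‖ * Real.exp (max (lmax X) (lmax Y)) :=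
    norm_exp_sub_exp_le hX hY'
  have h2 : lmax Y ≤ lmax X + ε := by
    have := lmax_add_le hX (hY'.sub hX)
    simp only [add_sub_cancel] at this
    linarith [hYX]
  have h3 : max (lmax X) (lmax Y) ≤ lmax X + ε := max_le (by linarith) h2
  calc ‖exp Y - exp X‖ ≤ ‖Y - X‖ * Real.exp (max (lmax X) (lmax Y)) := h1
    _ ≤ ε * Real.exp (lmax X + ε) :=
        mul_le_mul hYX (Real.exp_le_exp.mpr h3) (Real.exp_pos _).le hε

lemma norm_algebraMapReal (r : ℝ) : ‖algebraMap ℝ (Matrix (Fin n) (Fin n) ℂ) r‖ = |r| := by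
  rw [Algebra.algebraMap_eq_smul_one, norm_smul, Real.norm_eq_abs, norm_one, mul_one]

lemma S_mem (hX : IsSelfAdjoint X) {ε : ℝ} (hε : 0 ≤ ε) :
    (Real.exp ε - 1) * Real.exp (lmax X) ∈ S X ε := by
  refine ⟨X + algebraMap ℝ _ ε, hX.add (isSelfAdjoint_algebraMap' ε), ?_, ?_⟩
  · rw [add_sub_cancel_left, norm_algebraMapReal, abs_of_nonneg hε]
  · rw [exp_add_algebraMap]
    have : Real.exp ε • exp X - exp X = (Real.exp ε - 1) • exp X := by
      rw [sub_smul, one_smul]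
    rw [this, norm_smul, Real.norm_eq_abs, norm_exp_eq hX,
      abs_of_nonneg (by linarith [Real.one_le_exp hε])]

lemma S_sSup (hX : IsSelfAdjoint X) {ε : ℝ} (hε : 0 ≤ ε) :
    (Real.exp ε - 1) * Real.exp (lmax X) ≤ sSup (S X ε) ∧
      sSup (S X ε) ≤ ε * Real.exp (lmax X + ε) :=
  ⟨le_csSup ⟨_, S_ub hX hε⟩ (S_mem hX hε),
    csSup_le ⟨_, S_mem hX hε⟩ (S_ub hX hε)⟩

end LevelOne

lemma tendsto_exp_sub_one_div :
    Tendsto (fun ε : ℝ => (Real.exp ε - 1) / ε) (𝓝[>] 0) (𝓝 1) := by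
  have h := (Real.hasDerivAt_exp 0)
  rw [hasDerivAt_iff_tendsto_slope] at h
  have h2 : Tendsto (slope Real.exp 0) (𝓝[>] 0) (𝓝 (Real.exp 0)) :=
    h.mono_left (nhdsWithin_mono _ fun x hx => ne_of_gt hx)
  rw [Real.exp_zero] at h2
  refine h2.congr fun ε => ?_
  rw [slope_def_field, Real.exp_zero, sub_zero]

variable {X : Matrix (Fin n) (Fin n) ℂ}

lemma tendsto_level1 (hX : IsSelfAdjoint X) :
    Tendsto (fun ε : ℝ => sSup (S X ε) / ε) (𝓝[>] 0) (𝓝 (Real.exp (lmax X))) := by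
  have hlb : Tendsto (fun ε : ℝ => (Real.exp ε - 1) / ε * Real.exp (lmax X)) (𝓝[>] 0)
      (𝓝 (Real.exp (lmax X))) := by
    simpa using tendsto_exp_sub_one_div.mul_const (Real.exp (lmax X))
  have hub : Tendsto (fun ε : ℝ => Real.exp (lmax X + ε)) (𝓝[>] 0)
      (𝓝 (Real.exp (lmax X))) := by
    have hcont : ContinuousAt (fun ε : ℝ => Real.exp (lmax X + ε)) 0 := by fun_prop
    have := hcont.tendsto.mono_left (nhdsWithin_le_nhds (s := Set.Ioi (0:ℝ)))
    simpa using this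
  refine tendsto_of_tendsto_of_tendsto_of_le_of_le' hlb hub ?_ ?_
  · filter_upwards [self_mem_nhdsWithin] with ε (hε : 0 < ε)
    rw [div_mul_eq_mul_div]
    gcongr
    exact (S_sSup hX hε.le).1
  · filter_upwards [self_mem_nhdsWithin] with ε (hε : 0 < ε)
    rw [div_le_iff₀ hε, mul_comm]
    exact (S_sSup hX hε.le).2

end StructLevel2Aux

open StructLevel2Aux NormedSpace in
/-- Proposition 3.3 of the paper. If `c X` is the structured level-1 condition
number (in the spectral norm) of the matrix exponential at a Hermitian `X`, with Hermitian
perturbations, then the structured level-2 condition number of the matrix exponential at a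
Hermitian `A` equals `e^{λmax(A)}`. -/
theorem structured_level2_condition_number_exp_hermitian
    (n : ℕ) (hn : 1 ≤ n)
    (A : Matrix (Fin n) (Fin n) ℂ) (hA : A.IsHermitian)
    (c : Matrix (Fin n) (Fin n) ℂ → ℝ)
    (hc : ∀ X : Matrix (Fin n) (Fin n) ℂ, X.IsHermitian →
      Tendsto (fun ε : ℝ =>
          (sSup {r : ℝ | ∃ Y : Matrix (Fin n) (Fin n) ℂ, Y.IsHermitian ∧ ‖Y - X‖ ≤ ε ∧
            r = ‖NormedSpace.exp Y - NormedSpace.exp X‖}) / ε)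
        (𝓝[>] 0) (𝓝 (c X))) :
    Tendsto (fun ε : ℝ =>
        (sSup {r : ℝ | ∃ Z : Matrix (Fin n) (Fin n) ℂ, Z.IsHermitian ∧ ‖Z‖ ≤ ε ∧
          r = |c (A + Z) - c A|}) / ε)
      (𝓝[>] 0) (𝓝 (Real.exp (⨆ i, hA.eigenvalues i))) := by
  have : NeZero n := ⟨by omega⟩
  have hA' : IsSelfAdjoint A := hA
  -- identify `c` on Hermitian matrices
  have hc' : ∀ X : Matrix (Fin n) (Fin n) ℂ, X.IsHermitian → c X = Real.exp (lmax X) := by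
    intro X hX
    refine tendsto_nhds_unique ?_ (tendsto_level1 (hX : IsSelfAdjoint X))
    exact hc X hX
  -- identify the supremum with the eigenvalue supremum
  have hiSup : (⨆ i, hA.eigenvalues i) = lmax A := by
    rw [lmax, hA.spectrum_real_eq_range_eigenvalues]
    rfl
  rw [hiSup]
  -- compute the level-2 supremum exactly
  have hsup : ∀ ε : ℝ, 0 < ε →
      sSup {r : ℝ | ∃ Z : Matrix (Fin n) (Fin n) ℂ, Z.IsHermitian ∧ ‖Z‖ ≤ ε ∧
        r = |c (A + Z) - c A|} = Real.exp (lmax A) * (Real.exp ε - 1) := by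
    intro ε hε
    have hub : ∀ r ∈ {r : ℝ | ∃ Z : Matrix (Fin n) (Fin n) ℂ, Z.IsHermitian ∧ ‖Z‖ ≤ ε ∧
        r = |c (A + Z) - c A|}, r ≤ Real.exp (lmax A) * (Real.exp ε - 1) := by
      rintro r ⟨Z, hZ, hZε, rfl⟩
      have hZ' : IsSelfAdjoint Z := hZ
      rw [hc' (A + Z) (hA'.add hZ'), hc' A hA]
      exact exp_abs_sub_le ((abs_lmax_sub_le hA' hZ').trans hZε)
    have hmem : Real.exp (lmax A) * (Real.exp ε - 1) ∈
        {r : ℝ | ∃ Z : Matrix (Fin n) (Fin n) ℂ, Z.IsHermitian ∧ ‖Z‖ ≤ ε ∧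
          r = |c (A + Z) - c A|} := by
      refine ⟨algebraMap ℝ _ ε, isSelfAdjoint_algebraMap' ε, ?_, ?_⟩
      · rw [norm_algebraMapReal, abs_of_nonneg hε.le]
      · rw [hc' _ (hA'.add (isSelfAdjoint_algebraMap' ε)), hc' A hA,
          lmax_add_algebraMap hA', Real.exp_add,
          abs_of_nonneg (by nlinarith [Real.one_le_exp hε.le, Real.exp_pos (lmax A)])]
        ring
    exact le_antisymm (csSup_le ⟨_, hmem⟩ hub) (le_csSup ⟨_, hub⟩ hmem)
  -- conclude via the scalar limit
  have hlim : Tendsto (fun ε : ℝ => Real.exp (lmax A) * (Real.exp ε - 1) / ε) (𝓝[>] 0)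
      (𝓝 (Real.exp (lmax A))) := by
    have := tendsto_exp_sub_one_div.const_mul (Real.exp (lmax A))
    simp only [mul_one] at this
    refine this.congr fun ε => ?_
    rw [mul_div_assoc]
  refine hlim.congr' ?_
  filter_upwards [self_mem_nhdsWithin] with ε (hε : 0 < ε)
  rw [hsup ε hε]
end

section
/- Let n ≥ 1 and let A ∈ ℂ^{n×n} be Hermitian with largest eigenvalue λmax(A). Then the quantity sup{‖exp(Y) − exp(A)‖₂ : Y Hermitian, ‖Y − A‖₂ ≤ ε}/ε tends to e^{λmax(A)} as ε → 0⁺; that is, the structured level-1 condition number of the matrix exponential at A in the spectral norm, with perturbations restricted to Hermitian matrices, equals e^{λmax(A)}. -/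
open Filter Topology Matrix NormedSpace
open scoped Matrix.Norms.L2Operator ComplexOrder

variable {n : ℕ}

lemma aux_diag_le (v : Fin n → ℂ) {r : ℝ} (hr : 0 ≤ r) (h : ∀ i, ‖v i‖ ≤ r) :
    ‖Matrix.diagonal v‖ ≤ r := by
  rw [Matrix.l2_opNorm_def]
  refine ContinuousLinearMap.opNorm_le_bound _ hr fun x => ?_
  have hx : ((Matrix.toEuclideanLin.trans LinearMap.toContinuousLinearMap) (Matrix.diagonal v)) x
      = (EuclideanSpace.equiv (Fin n) ℂ).symm ((Matrix.diagonal v) *ᵥ (WithLp.equiv 2 _ x)) := rfl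
  rw [hx, EuclideanSpace.norm_eq, EuclideanSpace.norm_eq, ← Real.sqrt_sq hr,
    ← Real.sqrt_mul (sq_nonneg r)]
  apply Real.sqrt_le_sqrt
  rw [Finset.mul_sum]
  apply Finset.sum_le_sum
  intro i _
  have h1 : ((EuclideanSpace.equiv (Fin n) ℂ).symm
      ((Matrix.diagonal v) *ᵥ (WithLp.equiv 2 _ x))) i = v i * x i := by
    simp [Matrix.mulVec_diagonal]
  rw [h1, norm_mul, mul_pow]
  exact mul_le_mul_of_nonneg_right
    (pow_le_pow_left₀ (norm_nonneg _) (h i) 2) (sq_nonneg _)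

lemma aux_le_diag (v : Fin n → ℂ) (i : Fin n) : ‖v i‖ ≤ ‖Matrix.diagonal v‖ := by
  have h := (Matrix.diagonal v).l2_opNorm_mulVec (EuclideanSpace.single i 1)
  have h1 : (EuclideanSpace.equiv (Fin n) ℂ).symm
      ((Matrix.diagonal v) *ᵥ (EuclideanSpace.single i (1:ℂ)))
      = EuclideanSpace.single i (v i) := by
    apply (EuclideanSpace.equiv (Fin n) ℂ).injective
    ext j
    by_cases hji : j = i
    · subst hji; simp [Matrix.mulVec_diagonal]
    · simp [Matrix.mulVec_diagonal, EuclideanSpace.single_apply, hji]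
  rw [h1, EuclideanSpace.norm_single, EuclideanSpace.norm_single, norm_one, mul_one] at h
  exact h

lemma aux_nontrivial (hn : 1 ≤ n) : Nontrivial (Matrix (Fin n) (Fin n) ℂ) := by
  refine ⟨0, 1, fun h => ?_⟩
  have := congrFun (congrFun h ⟨0, hn⟩) ⟨0, hn⟩
  simp [Matrix.one_apply] at this

lemma aux_norm_unitary (hn : 1 ≤ n) {U : Matrix (Fin n) (Fin n) ℂ}
    (hU : U ∈ Matrix.unitaryGroup (Fin n) ℂ) (M : Matrix (Fin n) (Fin n) ℂ) :
    ‖U * M * star U‖ = ‖M‖ := by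
  haveI := aux_nontrivial hn
  have hU1 : ‖U‖ = 1 := CStarRing.norm_of_mem_unitary hU
  have hU2 : ‖star U‖ = 1 := CStarRing.norm_of_mem_unitary (Unitary.star_mem hU)
  apply le_antisymm
  · calc ‖U * M * star U‖ ≤ ‖U * M‖ * ‖star U‖ := Matrix.l2_opNorm_mul _ _
      _ ≤ ‖U‖ * ‖M‖ * ‖star U‖ :=
        mul_le_mul_of_nonneg_right (Matrix.l2_opNorm_mul _ _) (norm_nonneg _)
      _ = ‖M‖ := by rw [hU1, hU2, one_mul, mul_one]
  · have hM : M = star U * (U * M * star U) * U := by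
      rw [Unitary.mem_iff] at hU
      calc M = (star U * U) * M * (star U * U) := by rw [hU.1, one_mul, mul_one]
        _ = star U * (U * M * star U) * U := by noncomm_ring
    calc ‖M‖ = ‖star U * (U * M * star U) * U‖ := by rw [← hM]
      _ ≤ ‖star U * (U * M * star U)‖ * ‖U‖ := Matrix.l2_opNorm_mul _ _
      _ ≤ ‖star U‖ * ‖U * M * star U‖ * ‖U‖ :=
        mul_le_mul_of_nonneg_right (Matrix.l2_opNorm_mul _ _) (norm_nonneg _)
      _ = ‖U * M * star U‖ := by rw [hU1, hU2, one_mul, mul_one]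

lemma aux_exp_herm (hn : 1 ≤ n) {B : Matrix (Fin n) (Fin n) ℂ} (hB : B.IsHermitian) :
    exp B = (hB.eigenvectorUnitary : Matrix (Fin n) (Fin n) ℂ) *
      Matrix.diagonal (fun i => Complex.exp (hB.eigenvalues i)) *
      star (hB.eigenvectorUnitary : Matrix (Fin n) (Fin n) ℂ) := by
  set U := (hB.eigenvectorUnitary : Matrix (Fin n) (Fin n) ℂ) with hUdef
  have hinv : U⁻¹ = star U := Matrix.inv_eq_left_inv
    (Unitary.coe_star_mul_self hB.eigenvectorUnitary)
  have hu : IsUnit U := ⟨Unitary.toUnits hB.eigenvectorUnitary, rfl⟩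
  conv_lhs => rw [hB.spectral_theorem, Unitary.conjStarAlgAut_apply]
  rw [← hinv, Matrix.exp_conj _ _ hu, Matrix.exp_diagonal, hinv]
  congr 2
  funext i
  simp [Pi.exp_def, Function.comp, ← Complex.exp_eq_exp_ℂ]

lemma aux_norm_exp_eq (hn : 1 ≤ n) {B : Matrix (Fin n) (Fin n) ℂ} (hB : B.IsHermitian) :
    ‖exp B‖ = Real.exp (⨆ i, hB.eigenvalues i) := by
  haveI : Nonempty (Fin n) := ⟨⟨0, hn⟩⟩
  obtain ⟨i₀, hi₀⟩ := Finite.exists_max hB.eigenvalues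
  have hsup : (⨆ i, hB.eigenvalues i) = hB.eigenvalues i₀ :=
    le_antisymm (ciSup_le hi₀) (le_ciSup (Set.Finite.bddAbove (Set.finite_range _)) i₀)
  rw [aux_exp_herm hn hB, aux_norm_unitary hn (hB.eigenvectorUnitary).2, hsup]
  apply le_antisymm
  · refine aux_diag_le _ (Real.exp_nonneg _) fun i => ?_
    rw [Complex.norm_exp]
    simpa using Real.exp_le_exp.mpr (hi₀ i)
  · have := aux_le_diag (fun i => Complex.exp (hB.eigenvalues i)) i₀
    rwa [Complex.norm_exp, Complex.ofReal_re] at this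

lemma aux_dot_self_re_pos {x : Fin n → ℂ} (hx : x ≠ 0) :
    0 < (dotProduct (star x) x).re := by
  have h1 : (dotProduct (star x) x).re = ∑ i, Complex.normSq (x i) := by
    simp only [dotProduct, Pi.star_apply, Complex.re_sum]
    refine Finset.sum_congr rfl fun i _ => ?_
    rw [Complex.star_def, mul_comm, Complex.mul_conj, Complex.ofReal_re]
  rw [h1]
  obtain ⟨i, hi⟩ : ∃ i, x i ≠ 0 := by
    by_contra h; push_neg at h; exact hx (funext h)
  exact Finset.sum_pos' (fun j _ => Complex.normSq_nonneg _)
    ⟨i, Finset.mem_univ i, Complex.normSq_pos.mpr hi⟩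

lemma aux_posSemidef_eig {M : Matrix (Fin n) (Fin n) ℂ} (hM : M.PosSemidef)
    {x : Fin n → ℂ} (hx : x ≠ 0) {μ : ℝ} (hμ : M *ᵥ x = (μ : ℂ) • x) : 0 ≤ μ := by
  have h0 := hM.dotProduct_mulVec_nonneg x
  rw [hμ] at h0
  have h1 : dotProduct (star x) ((μ:ℂ) • x)
      = (μ:ℂ) * dotProduct (star x) x := by
    rw [dotProduct_smul, smul_eq_mul]
  rw [h1] at h0
  have h2 : 0 ≤ ((μ:ℂ) * dotProduct (star x) x).re := (Complex.le_def.mp h0).1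
  rw [Complex.mul_re, Complex.ofReal_re, Complex.ofReal_im, zero_mul, sub_zero] at h2
  nlinarith [aux_dot_self_re_pos hx]

lemma aux_posSemidef {B : Matrix (Fin n) (Fin n) ℂ} (hB : B.IsHermitian) {c : ℝ}
    (h : ∀ i, hB.eigenvalues i ≤ c) :
    (((c : ℂ) • (1 : Matrix (Fin n) (Fin n) ℂ)) - B).PosSemidef := by
  have hUU : (hB.eigenvectorUnitary : Matrix (Fin n) (Fin n) ℂ)
      * (hB.eigenvectorUnitary : Matrix (Fin n) (Fin n) ℂ)ᴴ = 1 := by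
    rw [← Matrix.star_eq_conjTranspose]; exact Unitary.coe_mul_star_self _
  have key : ((c : ℂ) • (1 : Matrix (Fin n) (Fin n) ℂ)) - B
      = (hB.eigenvectorUnitary : Matrix (Fin n) (Fin n) ℂ) *
        Matrix.diagonal (fun i => ((c - hB.eigenvalues i : ℝ) : ℂ)) *
        (hB.eigenvectorUnitary : Matrix (Fin n) (Fin n) ℂ)ᴴ := by
    have hD : Matrix.diagonal (fun i => ((c - hB.eigenvalues i : ℝ) : ℂ))
        = (c:ℂ) • (1 : Matrix (Fin n) (Fin n) ℂ)
          - Matrix.diagonal (RCLike.ofReal ∘ hB.eigenvalues) := by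
      ext i j
      rcases eq_or_ne i j with rfl | hij
      · simp [Matrix.one_apply_eq, Complex.ofReal_sub, RCLike.ofReal]
      · simp [Matrix.diagonal_apply_ne _ hij, Matrix.one_apply_ne hij]
    rw [hD, Matrix.mul_sub, Matrix.sub_mul, Matrix.mul_smul, Matrix.smul_mul, mul_one, hUU]
    congr 1
    conv_lhs => rw [hB.spectral_theorem, Unitary.conjStarAlgAut_apply, Matrix.star_eq_conjTranspose]
  rw [key]
  refine (Matrix.posSemidef_diagonal_iff.mpr fun i => ?_).mul_mul_conjTranspose_same _
  rw [← Complex.ofReal_zero, Complex.real_le_real]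
  linarith [h i]

lemma aux_eigvec_ne_zero {B : Matrix (Fin n) (Fin n) ℂ} (hB : B.IsHermitian) (j : Fin n) :
    (⇑(hB.eigenvectorBasis j) : Fin n → ℂ) ≠ 0 := by
  intro h
  have h1 : ‖hB.eigenvectorBasis j‖ = 1 := hB.eigenvectorBasis.orthonormal.1 j
  have h2 : hB.eigenvectorBasis j = 0 := by
    apply (EuclideanSpace.equiv (Fin n) ℂ).injective
    ext i
    exact congrFun h i
  rw [h2, norm_zero] at h1
  exact zero_ne_one h1

lemma aux_eig_le {B : Matrix (Fin n) (Fin n) ℂ} (hB : B.IsHermitian) {c : ℝ}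
    (h : (((c : ℂ) • (1 : Matrix (Fin n) (Fin n) ℂ)) - B).PosSemidef) (j : Fin n) :
    hB.eigenvalues j ≤ c := by
  have hx := aux_eigvec_ne_zero hB j
  have hμ : ((((c : ℂ) • (1 : Matrix (Fin n) (Fin n) ℂ)) - B)) *ᵥ ⇑(hB.eigenvectorBasis j)
      = ((c - hB.eigenvalues j : ℝ) : ℂ) • ⇑(hB.eigenvectorBasis j) := by
    rw [Matrix.sub_mulVec, Matrix.smul_mulVec, Matrix.one_mulVec,
      hB.mulVec_eigenvectorBasis]
    funext i
    simp only [Pi.sub_apply, Pi.smul_apply, smul_eq_mul, Complex.real_smul]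
    push_cast
    ring
  have := aux_posSemidef_eig h hx hμ
  linarith

lemma aux_eig_norm_bound {E : Matrix (Fin n) (Fin n) ℂ} (hE : E.IsHermitian) (j : Fin n) :
    hE.eigenvalues j ≤ ‖E‖ := by
  have h : ‖(EuclideanSpace.equiv (Fin n) ℂ).symm (E *ᵥ ⇑(hE.eigenvectorBasis j))‖
      ≤ ‖E‖ * ‖hE.eigenvectorBasis j‖ := E.l2_opNorm_mulVec (hE.eigenvectorBasis j)
  have h2 : ‖hE.eigenvectorBasis j‖ = 1 := hE.eigenvectorBasis.orthonormal.1 j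
  have h3 : (EuclideanSpace.equiv (Fin n) ℂ).symm (E *ᵥ ⇑(hE.eigenvectorBasis j))
      = (hE.eigenvalues j : ℝ) • (hE.eigenvectorBasis j) := by
    apply (EuclideanSpace.equiv (Fin n) ℂ).injective
    ext i
    exact congrFun (hE.mulVec_eigenvectorBasis j) i
  rw [h3, norm_smul, h2, mul_one] at h
  rw [mul_one] at h
  calc hE.eigenvalues j ≤ |hE.eigenvalues j| := le_abs_self _
    _ = ‖hE.eigenvalues j‖ := rfl
    _ ≤ ‖E‖ := h

lemma aux_weyl (hn : 1 ≤ n) {A Y : Matrix (Fin n) (Fin n) ℂ} (hA : A.IsHermitian)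
    (hY : Y.IsHermitian) (j : Fin n) :
    hY.eigenvalues j ≤ (⨆ i, hA.eigenvalues i) + ‖Y - A‖ := by
  haveI : Nonempty (Fin n) := ⟨⟨0, hn⟩⟩
  set l := ⨆ i, hA.eigenvalues i with hl
  set d := ‖Y - A‖ with hd
  have h1 : (((l : ℂ) • 1) - A).PosSemidef := aux_posSemidef hA fun i =>
    le_ciSup (Set.Finite.bddAbove (Set.finite_range _)) i
  have h2 : (((d : ℂ) • 1) - (Y - A)).PosSemidef :=
    aux_posSemidef (hY.sub hA) fun i => aux_eig_norm_bound (hY.sub hA) i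
  have h3 : ((((l + d : ℝ) : ℂ) • (1 : Matrix (Fin n) (Fin n) ℂ)) - Y).PosSemidef := by
    have heq : ((((l + d : ℝ) : ℂ) • (1 : Matrix (Fin n) (Fin n) ℂ)) - Y)
        = (((l : ℂ) • 1) - A) + (((d : ℂ) • 1) - (Y - A)) := by
      push_cast
      rw [add_smul]
      abel
    rw [heq]
    exact h1.add h2
  exact aux_eig_le hY h3 j

lemma aux_herm_smul {B : Matrix (Fin n) (Fin n) ℂ} (hB : B.IsHermitian) (s : ℝ) :
    (s • B).IsHermitian := by
  show (s • B)ᴴ = s • B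
  rw [Matrix.conjTranspose_smul, star_trivial, hB.eq]

lemma aux_posSemidef_smul {M : Matrix (Fin n) (Fin n) ℂ} (hM : M.PosSemidef) {s : ℝ}
    (hs : 0 ≤ s) : (s • M).PosSemidef := by
  refine Matrix.PosSemidef.of_dotProduct_mulVec_nonneg (aux_herm_smul hM.1 s) fun x => ?_
  have h := hM.dotProduct_mulVec_nonneg x
  have heq : dotProduct (star x) ((s • M) *ᵥ x)
      = (s : ℂ) * dotProduct (star x) (M *ᵥ x) := by
    have : (s • M) *ᵥ x = s • (M *ᵥ x) := by
      funext i
      simp [Matrix.mulVec, dotProduct, Finset.smul_sum, smul_mul_assoc, mul_assoc]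
    rw [this]
    have : dotProduct (star x) (s • (M *ᵥ x))
        = s • dotProduct (star x) (M *ᵥ x) := dotProduct_smul _ _ _
    rw [this, Complex.real_smul]
  rw [heq]
  rw [Complex.le_def] at h ⊢
  constructor
  · rw [Complex.mul_re, Complex.ofReal_re, Complex.ofReal_im, zero_mul, sub_zero]
    exact mul_nonneg hs h.1
  · rw [Complex.mul_im, Complex.ofReal_re, Complex.ofReal_im, zero_mul, add_zero,
      Complex.zero_im, ← h.2, Complex.zero_im]
    ring

lemma aux_norm_exp_le (hn : 1 ≤ n) {B : Matrix (Fin n) (Fin n) ℂ} (hB : B.IsHermitian)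
    {c : ℝ} (h : ∀ i, hB.eigenvalues i ≤ c) : ‖exp B‖ ≤ Real.exp c := by
  haveI : Nonempty (Fin n) := ⟨⟨0, hn⟩⟩
  rw [aux_norm_exp_eq hn hB]
  exact Real.exp_le_exp.mpr (ciSup_le h)

lemma aux_norm_exp_smul_le (hn : 1 ≤ n) {B : Matrix (Fin n) (Fin n) ℂ} (hB : B.IsHermitian)
    {c s : ℝ} (hs : 0 ≤ s) (h : ∀ i, hB.eigenvalues i ≤ c) :
    ‖exp (s • B)‖ ≤ Real.exp (s * c) := by
  refine aux_norm_exp_le hn (aux_herm_smul hB s) fun i => ?_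
  have h1 : (((c : ℂ) • (1 : Matrix (Fin n) (Fin n) ℂ)) - B).PosSemidef := aux_posSemidef hB h
  have h2 : ((((s * c : ℝ) : ℂ) • (1 : Matrix (Fin n) (Fin n) ℂ)) - s • B).PosSemidef := by
    have heq : ((((s * c : ℝ) : ℂ) • (1 : Matrix (Fin n) (Fin n) ℂ)) - s • B)
        = s • (((c : ℂ) • (1 : Matrix (Fin n) (Fin n) ℂ)) - B) := by
      rw [smul_sub]
      congr 1
      ext i j
      simp [Matrix.smul_apply, Complex.real_smul]
      ring
    rw [heq]
    exact aux_posSemidef_smul h1 hs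
  exact aux_eig_le (aux_herm_smul hB s) h2 i

lemma aux_key (hn : 1 ≤ n) {A Y : Matrix (Fin n) (Fin n) ℂ} (hA : A.IsHermitian)
    (hY : Y.IsHermitian) {a b : ℝ} (hab : a ≤ b)
    (hAa : ∀ i, hA.eigenvalues i ≤ a) (hYb : ∀ i, hY.eigenvalues i ≤ b) :
    ‖exp Y - exp A‖ ≤ ‖Y - A‖ * Real.exp b := by
  set f : ℝ → Matrix (Fin n) (Fin n) ℂ := fun s => exp (s • Y) * exp ((1 - s) • A) with hf
  set F : ℝ → Matrix (Fin n) (Fin n) ℂ :=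
    fun s => exp (s • Y) * (Y - A) * exp ((1 - s) • A) with hF
  have hexp : (exp : Matrix (Fin n) (Fin n) ℂ → _) = exp := rfl
  have hderiv : ∀ s : ℝ, HasDerivAt f (F s) s := by
    intro s
    have d1 : HasDerivAt (fun u : ℝ => exp (u • Y)) (exp (s • Y) * Y) s := by
      rw [← hexp]
      exact hasDerivAt_exp_smul_const Y s
    have d2 : HasDerivAt (fun u : ℝ => exp ((1 - u) • A))
        (-(exp ((1 - s) • A) * A)) s := by
      have base : HasDerivAt (fun u : ℝ => exp (u • A))
          (exp ((1 - s) • A) * A) (1 - s) := by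
        rw [← hexp]; exact hasDerivAt_exp_smul_const A (1 - s)
      have hinner : HasDerivAt (fun u : ℝ => 1 - u) (-1) s := by
        simpa using (hasDerivAt_id s).const_sub 1
      have comp := HasDerivAt.scomp s base hinner
      simpa [neg_smul, one_smul, Function.comp_def] using comp
    have hmul := d1.mul d2
    have hcomm : Commute A (exp ((1 - s) • A)) :=
      ((Commute.refl A).smul_right ((1 - s) : ℝ)).exp_right
    have heq : exp (s • Y) * Y * exp ((1 - s) • A)
        + exp (s • Y) * -(exp ((1 - s) • A) * A) = F s := by
      rw [← hcomm.eq, hF]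
      noncomm_ring
    rw [heq] at hmul
    exact hmul
  have hbound : ∀ x ∈ Set.Ico (0:ℝ) 1, ‖F x‖ ≤ ‖Y - A‖ * Real.exp b := by
    intro x hx
    obtain ⟨hx0, hx1⟩ := hx
    have h1 : ‖exp (x • Y)‖ ≤ Real.exp (x * b) := aux_norm_exp_smul_le hn hY hx0 hYb
    have h2 : ‖exp ((1 - x) • A)‖ ≤ Real.exp ((1 - x) * a) :=
      aux_norm_exp_smul_le hn hA (by linarith) hAa
    calc ‖F x‖ ≤ ‖exp (x • Y) * (Y - A)‖ * ‖exp ((1 - x) • A)‖ :=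
          Matrix.l2_opNorm_mul _ _
      _ ≤ ‖exp (x • Y)‖ * ‖Y - A‖ * ‖exp ((1 - x) • A)‖ :=
          mul_le_mul_of_nonneg_right (Matrix.l2_opNorm_mul _ _) (norm_nonneg _)
      _ ≤ Real.exp (x * b) * ‖Y - A‖ * Real.exp ((1 - x) * a) := by
          apply mul_le_mul (mul_le_mul_of_nonneg_right h1 (norm_nonneg _)) h2
            (norm_nonneg _)
          positivity
      _ = ‖Y - A‖ * Real.exp (x * b + (1 - x) * a) := by
          rw [Real.exp_add]; ring
      _ ≤ ‖Y - A‖ * Real.exp b := by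
          apply mul_le_mul_of_nonneg_left _ (norm_nonneg _)
          apply Real.exp_le_exp.mpr
          nlinarith
  have hmvt := norm_image_sub_le_of_norm_deriv_le_segment'
    (fun x _ => (hderiv x).hasDerivWithinAt) hbound 1 (Set.right_mem_Icc.mpr zero_le_one)
  have hf1 : f 1 = exp Y := by
    rw [hf]
    simp [exp_zero]
  have hf0 : f 0 = exp A := by
    rw [hf]
    simp [exp_zero]
  rw [hf1, hf0] at hmvt
  simpa using hmvt

lemma aux_lower (hn : 1 ≤ n) {A : Matrix (Fin n) (Fin n) ℂ} (hA : A.IsHermitian) {ε : ℝ}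
    (hε : 0 < ε) :
    ∃ Y : Matrix (Fin n) (Fin n) ℂ, Y.IsHermitian ∧ ‖Y - A‖ ≤ ε ∧
      ‖exp Y - exp A‖ = (Real.exp ε - 1) * Real.exp (⨆ i, hA.eigenvalues i) := by
  haveI := aux_nontrivial hn
  have h1 : ((ε : ℂ) • (1 : Matrix (Fin n) (Fin n) ℂ)).IsHermitian := by
    show _ᴴ = _
    rw [Matrix.conjTranspose_smul, Matrix.conjTranspose_one, Complex.star_def,
      Complex.conj_ofReal]
  refine ⟨A + (ε : ℂ) • 1, hA.add h1, ?_, ?_⟩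
  · rw [add_sub_cancel_left, norm_smul]
    have : ‖(1 : Matrix (Fin n) (Fin n) ℂ)‖ = 1 := CStarRing.norm_one
    rw [this, mul_one, Complex.norm_real, Real.norm_eq_abs, abs_of_pos hε]
  · have h2 : exp ((ε:ℂ) • (1 : Matrix (Fin n) (Fin n) ℂ)) = Complex.exp ε • 1 := by
      have h3 := algebraMap_exp_comm (𝕂 := ℂ) (𝔸 := Matrix (Fin n) (Fin n) ℂ) (ε : ℂ)
      rw [Algebra.algebraMap_eq_smul_one, Algebra.algebraMap_eq_smul_one] at h3
      rw [← h3, ← Complex.exp_eq_exp_ℂ]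
    have hYexp : exp (A + (ε:ℂ) • 1) = Complex.exp ε • exp A := by
      rw [exp_add_of_commute _ _ ((Commute.one_right A).smul_right ((ε:ℂ))), h2,
        mul_smul_comm, mul_one]
    rw [hYexp]
    calc ‖Complex.exp ε • exp A - exp A‖
        = ‖(Complex.exp ε - 1) • exp A‖ := by rw [sub_smul, one_smul]
      _ = ‖Complex.exp (ε:ℂ) - 1‖ * ‖exp A‖ := norm_smul _ _
      _ = (Real.exp ε - 1) * Real.exp (⨆ i, hA.eigenvalues i) := by
          rw [aux_norm_exp_eq hn hA, ← Complex.ofReal_exp, ← Complex.ofReal_one,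
            ← Complex.ofReal_sub, Complex.norm_real, Real.norm_eq_abs,
            abs_of_nonneg (by linarith [Real.one_le_exp hε.le])]

/-- level-1 assertion in the proof of Proposition 3.3 of the paper. The
structured level-1 condition number of the matrix exponential at a Hermitian matrix `A`, in the
spectral norm and with Hermitian perturbations, equals `e^{λmax(A)}`. -/
theorem structured_level1_condition_number_exp_hermitian
    (n : ℕ) (hn : 1 ≤ n)
    (A : Matrix (Fin n) (Fin n) ℂ) (hA : A.IsHermitian) :
    Tendsto (fun ε : ℝ =>
        (sSup {r : ℝ | ∃ Y : Matrix (Fin n) (Fin n) ℂ, Y.IsHermitian ∧ ‖Y - A‖ ≤ ε ∧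
          r = ‖NormedSpace.exp Y - NormedSpace.exp A‖}) / ε)
      (𝓝[>] 0) (𝓝 (Real.exp (⨆ i, hA.eigenvalues i))) := by
  haveI : Nonempty (Fin n) := ⟨⟨0, hn⟩⟩
  set l := ⨆ i, hA.eigenvalues i with hl
  have hAa : ∀ i, hA.eigenvalues i ≤ l := fun i =>
    le_ciSup (Set.Finite.bddAbove (Set.finite_range _)) i
  have key : ∀ ε : ℝ, 0 < ε →
      (Real.exp ε - 1) / ε * Real.exp l ≤
        (sSup {r : ℝ | ∃ Y : Matrix (Fin n) (Fin n) ℂ, Y.IsHermitian ∧ ‖Y - A‖ ≤ ε ∧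
          r = ‖exp Y - exp A‖}) / ε ∧
      (sSup {r : ℝ | ∃ Y : Matrix (Fin n) (Fin n) ℂ, Y.IsHermitian ∧ ‖Y - A‖ ≤ ε ∧
          r = ‖exp Y - exp A‖}) / ε ≤ Real.exp (l + ε) := by
    intro ε hε
    set S := {r : ℝ | ∃ Y : Matrix (Fin n) (Fin n) ℂ, Y.IsHermitian ∧ ‖Y - A‖ ≤ ε ∧
      r = ‖exp Y - exp A‖} with hS
    have hub : ∀ r ∈ S, r ≤ ε * Real.exp (l + ε) := by
      rintro r ⟨Y, hY, hYA, rfl⟩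
      have hYb : ∀ i, hY.eigenvalues i ≤ l + ε := fun i =>
        le_trans (aux_weyl hn hA hY i) (by linarith)
      calc ‖exp Y - exp A‖ ≤ ‖Y - A‖ * Real.exp (l + ε) :=
            aux_key hn hA hY (le_add_of_nonneg_right hε.le) hAa hYb
        _ ≤ ε * Real.exp (l + ε) := mul_le_mul_of_nonneg_right hYA (Real.exp_nonneg _)
    have hbdd : BddAbove S := ⟨ε * Real.exp (l + ε), hub⟩
    obtain ⟨Y0, hY0, hY0A, hY0eq⟩ := aux_lower hn hA hε
    have hmem : (Real.exp ε - 1) * Real.exp l ∈ S := ⟨Y0, hY0, hY0A, hY0eq.symm⟩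
    constructor
    · have h1 : (Real.exp ε - 1) * Real.exp l ≤ sSup S := le_csSup hbdd hmem
      calc (Real.exp ε - 1) / ε * Real.exp l
          = ((Real.exp ε - 1) * Real.exp l) / ε := by ring
        _ ≤ sSup S / ε := by
            apply div_le_div_of_nonneg_right h1 hε.le
    · have h2 : sSup S ≤ ε * Real.exp (l + ε) := csSup_le ⟨_, hmem⟩ hub
      calc sSup S / ε ≤ (ε * Real.exp (l + ε)) / ε := by
            apply div_le_div_of_nonneg_right h2 hε.le
        _ = Real.exp (l + ε) := by field_simp
  have hlow : Tendsto (fun ε : ℝ => (Real.exp ε - 1) / ε * Real.exp l) (𝓝[>] 0)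
      (𝓝 (Real.exp l)) := by
    have h2 := hasDerivAt_iff_tendsto_slope.mp (Real.hasDerivAt_exp 0)
    rw [Real.exp_zero] at h2
    have h3 : Tendsto (slope Real.exp 0) (𝓝[>] (0:ℝ)) (𝓝 1) :=
      h2.mono_left (nhdsWithin_mono 0 (fun x hx => ne_of_gt hx))
    have h4 : Tendsto (fun ε : ℝ => (Real.exp ε - 1) / ε) (𝓝[>] 0) (𝓝 1) := by
      refine h3.congr fun x => ?_
      simp [slope_def_field, Real.exp_zero]
    have := h4.mul (tendsto_const_nhds (x := Real.exp l))
    simpa using this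
  have hhigh : Tendsto (fun ε : ℝ => Real.exp (l + ε)) (𝓝[>] 0) (𝓝 (Real.exp l)) := by
    have h5 : Tendsto (fun ε : ℝ => l + ε) (𝓝[>] 0) (𝓝 l) := by
      have h6 : Tendsto (fun ε : ℝ => l + ε) (𝓝 (0:ℝ)) (𝓝 (l + 0)) :=
        tendsto_const_nhds.add tendsto_id
      rw [add_zero] at h6
      exact h6.mono_left nhdsWithin_le_nhds
    exact (Real.continuous_exp.tendsto _).comp h5
  refine tendsto_of_tendsto_of_tendsto_of_le_of_le' hlow hhigh ?_ ?_
  · filter_upwards [self_mem_nhdsWithin] with ε hε using (key ε hε).1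
  · filter_upwards [self_mem_nhdsWithin] with ε hε using (key ε hε).2
end
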